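/- arXiv:2304.00298 — 7 statements merged into one kernel-verified Lean document; each statement's English description precedes it below -/
import Mathlib

section
/- For any odd prime p and positive integer r, the sum over k from 0 to p^r - 1 of (1/2^k) * binomial(2k, k) is congruent to (-1)^((p^r - 1)/2) modulo p (as a congruence of p-adic integers). -/
variable {p : ℕ} [hp : Fact p.Prime]

lemma ST_digit (hodd : Odd p) : ∀ d, d < p →
    ((Nat.choose (2 * d) d : ZMod p)) = (-4) ^ d * (Nat.choose ((p - 1) / 2) d : ZMod p) := by
  have hm : 2 * ((p - 1) / 2) + 1 = p := by
    have := Nat.odd_iff.mp hodd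
    have := (Fact.out (p := p.Prime)).two_le
    omega
  set m := (p - 1) / 2 with hmdef
  have hmz : (2 : ZMod p) * (m : ZMod p) = -1 := by
    have h0 : ((2 * m + 1 : ℕ) : ZMod p) = 0 := by rw [hm]; exact ZMod.natCast_self p
    push_cast at h0
    linear_combination h0
  intro d
  induction d with
  | zero => simp
  | succ d ih =>
    intro hdp
    have hd : d < p := Nat.lt_of_succ_lt hdp
    have ih := ih hd
    by_cases hcase : d + 1 ≤ m
    · -- small digit case
      have h1 := Nat.succ_mul_centralBinom_succ d
      simp only [Nat.centralBinom] at h1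
      have c1 := congrArg (fun x : ℕ => (x : ZMod p)) h1
      push_cast at c1
      have h2 := Nat.choose_succ_right_eq m d
      have c2 := congrArg (fun x : ℕ => (x : ZMod p)) h2
      push_cast [Nat.cast_sub (show d ≤ m by omega)] at c2
      have hne : ((d : ZMod p) + 1) ≠ 0 := by
        have : ((d + 1 : ℕ) : ZMod p) ≠ 0 := by
          rw [Ne, ZMod.natCast_eq_zero_iff]
          exact fun h => absurd (Nat.le_of_dvd (by omega) h) (by omega)
        push_cast at this
        exact this
      apply mul_left_cancel₀ hne
      linear_combination c1 + 2 * (2 * (d : ZMod p) + 1) * ih - (-4 : ZMod p) ^ (d + 1) * c2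
        + 2 * (-4 : ZMod p) ^ d * (Nat.choose m d : ZMod p) * hmz
    · -- large digit case: both sides vanish
      rw [Nat.choose_eq_zero_of_lt (by omega : m < d + 1)]
      simp only [Nat.cast_zero, mul_zero]
      rw [ZMod.natCast_eq_zero_iff]
      exact Nat.Prime.dvd_choose hp.out (by omega) (by omega) (by omega)

lemma ST_lucas (n k : ℕ) : ((n.choose k : ZMod p)) =
    (Nat.choose (n % p) (k % p) : ZMod p) * (Nat.choose (n / p) (k / p) : ZMod p) := by
  have h := Choose.choose_modEq_choose_mod_mul_choose_div_nat (p := p) (n := n) (k := k)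
  have h2 := (ZMod.natCast_eq_natCast_iff _ _ _).mpr h
  push_cast at h2
  exact h2

lemma ST_lift (hodd : Odd p) : ∀ r : ℕ, ∀ k, k < p ^ r →
    ((Nat.choose (2 * k) k : ZMod p)) = (-4) ^ k * (Nat.choose ((p ^ r - 1) / 2) k : ZMod p) := by
  intro r
  induction r with
  | zero =>
    intro k hk
    rw [pow_zero] at hk
    obtain rfl : k = 0 := Nat.lt_one_iff.mp hk
    simp
  | succ r ih =>
    intro k hk
    have hp2 := (Fact.out (p := p.Prime)).two_le
    have hpodd := Nat.odd_iff.mp hodd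
    have hppos : 0 < p := by omega
    set m := (p - 1) / 2 with hmdef
    have hm1 : 2 * m + 1 = p := by omega
    set d := k % p with hd
    set q := k / p with hq
    have hkdq : k = p * q + d := by rw [hd, hq]; exact (Nat.div_add_mod k p).symm
    have hdlt : d < p := Nat.mod_lt _ hppos
    have hqlt : q < p ^ r := by
      rw [hq, Nat.div_lt_iff_lt_mul hppos]
      calc k < p ^ (r + 1) := hk
        _ = p ^ r * p := pow_succ p r
    obtain ⟨B, hB⟩ := hodd.pow (n := r)
    have hB' : (p ^ r - 1) / 2 = B := by omega
    have h2 : p ^ (r + 1) = 2 * (p * B + m) + 1 := by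
      rw [pow_succ, hB, ← hm1]; ring
    have hNv : (p ^ (r + 1) - 1) / 2 = p * B + m := by
      rw [h2]
      generalize p * B + m = X
      omega
    have hNmod : ((p ^ (r + 1) - 1) / 2) % p = m := by
      rw [hNv, Nat.add_comm, Nat.add_mul_mod_self_left, Nat.mod_eq_of_lt (by omega)]
    have hNdiv : ((p ^ (r + 1) - 1) / 2) / p = B := by
      rw [hNv, Nat.add_comm, Nat.add_mul_div_left _ _ hppos, Nat.div_eq_of_lt (by omega), zero_add]
    have lucasN : ((Nat.choose ((p ^ (r + 1) - 1) / 2) k : ZMod p)) =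
        (Nat.choose m d : ZMod p) * (Nat.choose B q : ZMod p) := by
      rw [ST_lucas, hNmod, hNdiv, ← hd, ← hq]
    by_cases hcase : d ≤ m
    · -- no carry
      have h2k : 2 * k = 2 * d + p * (2 * q) := by
        rw [show p * (2 * q) = 2 * (p * q) from by ring]
        omega
      have hmod2k : (2 * k) % p = 2 * d := by
        rw [h2k, Nat.add_mul_mod_self_left, Nat.mod_eq_of_lt (by omega)]
      have hdiv2k : (2 * k) / p = 2 * q := by
        rw [h2k, Nat.add_mul_div_left _ _ hppos, Nat.div_eq_of_lt (by omega), zero_add]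
      have lucas2k : ((Nat.choose (2 * k) k : ZMod p)) =
          (Nat.choose (2 * d) d : ZMod p) * (Nat.choose (2 * q) q : ZMod p) := by
        rw [ST_lucas, hmod2k, hdiv2k, ← hd, ← hq]
      have hpow : ((-4 : ZMod p)) ^ k = (-4) ^ d * (-4) ^ q := by
        conv_lhs => rw [hkdq]
        rw [pow_add, pow_mul, ZMod.pow_card, mul_comm]
      rw [lucas2k, lucasN, ST_digit hodd d hdlt, ih q hqlt, hB', hpow]
      ring
    · -- carry case: both sides are zero
      have h2k : 2 * k = (2 * d - p) + p * (2 * q + 1) := by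
        rw [show p * (2 * q + 1) = 2 * (p * q) + p from by ring]
        omega
      have hlt : 2 * d - p < p := by omega
      have hmod2k : (2 * k) % p = 2 * d - p := by
        rw [h2k, Nat.add_mul_mod_self_left, Nat.mod_eq_of_lt hlt]
      have hdiv2k : (2 * k) / p = 2 * q + 1 := by
        rw [h2k, Nat.add_mul_div_left _ _ hppos, Nat.div_eq_of_lt hlt, zero_add]
      have lucas2k : ((Nat.choose (2 * k) k : ZMod p)) =
          (Nat.choose (2 * d - p) d : ZMod p) * (Nat.choose (2 * q + 1) q : ZMod p) := by
        rw [ST_lucas, hmod2k, hdiv2k, ← hd, ← hq]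
      rw [lucas2k, lucasN, Nat.choose_eq_zero_of_lt (by omega : 2 * d - p < d),
        Nat.choose_eq_zero_of_lt (by omega : m < d)]
      simp

/-- Sun–Tauraso: for any odd prime `p` and positive integer `r`,
`∑_{k=0}^{p^r-1} (1/2^k) * C(2k,k) ≡ (-1)^((p^r-1)/2) (mod p)` in the `p`-adic integers. -/
theorem sun_tauraso_congruence (p : ℕ) [hp : Fact p.Prime] (hodd : Odd p) (r : ℕ) (hr : 0 < r) :
    ((p : ℤ_[p])) ∣
      (∑ k ∈ Finset.range (p ^ r),
          Ring.inverse ((2 : ℤ_[p]) ^ k) * (Nat.choose (2 * k) k : ℤ_[p])) -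
        (-1) ^ ((p ^ r - 1) / 2) := by
  have hp2 := (Fact.out (p := p.Prime)).two_le
  have hpodd := Nat.odd_iff.mp hodd
  have hp3 : 3 ≤ p := by omega
  have h2nz : (2 : ZMod p) ≠ 0 := by
    have : ((2 : ℕ) : ZMod p) ≠ 0 := by
      rw [Ne, ZMod.natCast_eq_zero_iff]
      intro hdvd
      exact absurd (Nat.le_of_dvd (by norm_num) hdvd) (by omega)
    simpa using this
  have h2unit : IsUnit ((2 : ℤ_[p])) := by
    by_contra h
    have h2 : (2 : ℤ_[p]) ∈ IsLocalRing.maximalIdeal ℤ_[p] := (IsLocalRing.mem_maximalIdeal _).mpr h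
    rw [← PadicInt.ker_toZMod, RingHom.mem_ker, map_ofNat] at h2
    exact h2nz h2
  have key : ∀ k : ℕ, PadicInt.toZMod (Ring.inverse ((2 : ℤ_[p]) ^ k)) = ((2 : ZMod p) ^ k)⁻¹ := by
    intro k
    have hu : IsUnit ((2 : ℤ_[p]) ^ k) := h2unit.pow k
    have h1 : Ring.inverse ((2 : ℤ_[p]) ^ k) * (2 : ℤ_[p]) ^ k = 1 := Ring.inverse_mul_cancel _ hu
    have h2 := congrArg PadicInt.toZMod h1
    rw [map_mul, map_pow, map_one, map_ofNat] at h2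
    exact eq_inv_of_mul_eq_one_left h2
  -- reduce to a computation in `ZMod p`
  rw [← Ideal.mem_span_singleton, ← PadicInt.maximalIdeal_eq_span_p, ← PadicInt.ker_toZMod,
    RingHom.mem_ker, map_sub, sub_eq_zero]
  set N := (p ^ r - 1) / 2 with hN
  have hp1 : 1 ≤ p ^ r := Nat.one_le_pow _ _ (by omega)
  have hNlt : N + 1 ≤ p ^ r := by omega
  calc PadicInt.toZMod (∑ k ∈ Finset.range (p ^ r),
          Ring.inverse ((2 : ℤ_[p]) ^ k) * (Nat.choose (2 * k) k : ℤ_[p]))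
      = ∑ k ∈ Finset.range (p ^ r), ((2 : ZMod p) ^ k)⁻¹ * (Nat.choose (2 * k) k : ZMod p) := by
        rw [map_sum]
        refine Finset.sum_congr rfl fun k _ => ?_
        rw [map_mul, key k, map_natCast]
    _ = ∑ k ∈ Finset.range (p ^ r), (-2 : ZMod p) ^ k * (Nat.choose N k : ZMod p) := by
        refine Finset.sum_congr rfl fun k hk => ?_
        rw [ST_lift hodd r k (Finset.mem_range.mp hk), ← inv_pow, ← mul_assoc, ← mul_pow,
          show ((2 : ZMod p))⁻¹ * (-4) = -2 from by rw [inv_mul_eq_iff_eq_mul₀ h2nz]; ring]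
    _ = ∑ k ∈ Finset.range (N + 1), (-2 : ZMod p) ^ k * (Nat.choose N k : ZMod p) := by
        refine (Finset.sum_subset (Finset.range_subset_range.mpr hNlt) fun k _ hk => ?_).symm
        rw [Nat.choose_eq_zero_of_lt (by simpa using hk), Nat.cast_zero, mul_zero]
    _ = (-2 + 1 : ZMod p) ^ N := by
        rw [add_pow]
        refine Finset.sum_congr rfl fun k _ => ?_
        rw [one_pow, mul_one]
    _ = (-1 : ZMod p) ^ N := by norm_num
    _ = PadicInt.toZMod ((-1 : ℤ_[p]) ^ N) := by rw [map_pow, map_neg, map_one]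
end

section
/- Carlitz's identity: for all n ≥ 0 and parameters a, b, q, we have sum_{k=0}^{n} ((a;q)_k (b;q)_k / (q;q)_k) * (-ab)^(n-k) * q^((n-k)(n+k-1)/2) = sum_{k=0}^{n} (a;q)_{n+1} * (-b)^k * q^(binomial(k,2)) / ((q;q)_k (q;q)_{n-k} (1 - a q^(n-k))), as an identity of rational functions in a, b, q. -/
/-- The `q`-shifted factorial `(a; q)_m = (1-a)(1-aq)⋯(1-aq^(m-1))` in a field `F`. -/
def qPochF {F : Type*} [Field F] (a q : F) (m : ℕ) : F :=
  ∏ i ∈ Finset.range m, (1 - a * q ^ i)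

section CarlitzAux
variable {F : Type*} [Field F]

lemma qPochF_succ (a q : F) (m : ℕ) :
    qPochF a q (m + 1) = qPochF a q m * (1 - a * q ^ m) := Finset.prod_range_succ _ _

lemma factor_ne {a q : F} {m : ℕ} (h : qPochF a q m ≠ 0)
    {i : ℕ} (hi : i < m) : 1 - a * q ^ i ≠ 0 := by
  rw [qPochF, Finset.prod_ne_zero_iff] at h
  exact h i (Finset.mem_range.2 hi)

lemma choose_succ_two (i : ℕ) : (i + 1).choose 2 = i.choose 2 + i := by
  simp [Nat.choose_succ_succ, Nat.choose_one_right, Nat.add_comm]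

lemma qbin (b q : F) : ∀ n : ℕ, (∀ k ≤ n, qPochF q q k ≠ 0) →
    ∑ k ∈ Finset.range (n + 1),
        (-b) ^ k * q ^ (k.choose 2) / (qPochF q q k * qPochF q q (n - k))
      = qPochF b q n / qPochF q q n := by
  intro n
  induction n with
  | zero => intro _; simp [qPochF]
  | succ n ih =>
    intro hq
    have hq' : ∀ k ≤ n, qPochF q q k ≠ 0 := fun k hk => hq k (by omega)
    have hP : ∀ k ≤ n + 1, qPochF q q k ≠ 0 := hq
    have hc : (1 : F) - q * q ^ n ≠ 0 := factor_ne (hq (n+1) le_rfl) (Nat.lt_succ_self n)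
    -- split each term into two pieces
    have hsplit : ∀ k ∈ Finset.range (n + 2),
        (-b) ^ k * q ^ (k.choose 2) / (qPochF q q k * qPochF q q (n + 1 - k))
        = (-b) ^ k * q ^ (k.choose 2) * (1 - q ^ (n + 1 - k)) /
            (qPochF q q k * qPochF q q (n + 1 - k) * (1 - q * q ^ n))
          + (-b) ^ k * q ^ (k.choose 2) * (q ^ (n + 1 - k) * (1 - q ^ k)) /
            (qPochF q q k * qPochF q q (n + 1 - k) * (1 - q * q ^ n)) := by
      intro k hk
      rw [Finset.mem_range] at hk
      have hk' : k ≤ n + 1 := by omega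
      obtain ⟨m, hm⟩ : ∃ m, n + 1 = k + m := ⟨n + 1 - k, by omega⟩
      have h1 : n + 1 - k = m := by omega
      have h2 : qPochF q q k ≠ 0 := hP k hk'
      have h3 : qPochF q q (n + 1 - k) ≠ 0 := hP _ (by omega)
      rw [h1] at h3 ⊢
      have hqn : q * q ^ n = q ^ k * q ^ m := by
        rw [← pow_succ', ← pow_add]; exact congrArg (fun t => q ^ t) hm
      rw [hqn]
      have h4 : (1:F) - q ^ k * q ^ m ≠ 0 := by rw [← hqn]; exact hc
      have h4' : (1:F) - q ^ m * q ^ k ≠ 0 := by rwa [mul_comm]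
      field_simp
      ring
    rw [Finset.sum_congr rfl hsplit, Finset.sum_add_distrib]
    -- first sum
    have hA : ∑ k ∈ Finset.range (n + 2),
        (-b) ^ k * q ^ (k.choose 2) * (1 - q ^ (n + 1 - k)) /
          (qPochF q q k * qPochF q q (n + 1 - k) * (1 - q * q ^ n))
        = (qPochF b q n / qPochF q q n) / (1 - q * q ^ n) := by
      rw [Finset.sum_range_succ]
      have hlast : (-b) ^ (n+1) * q ^ ((n+1).choose 2) * (1 - q ^ (n + 1 - (n+1))) /
          (qPochF q q (n+1) * qPochF q q (n + 1 - (n+1)) * (1 - q * q ^ n)) = 0 := by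
        simp
      rw [hlast, add_zero, ← ih hq', Finset.sum_div]
      refine Finset.sum_congr rfl fun k hk => ?_
      rw [Finset.mem_range] at hk
      have h1 : n + 1 - k = (n - k) + 1 := by omega
      rw [h1, qPochF_succ, pow_succ]
      have h2 : qPochF q q k ≠ 0 := hP k (by omega)
      have h3 : qPochF q q (n - k) ≠ 0 := hP _ (by omega)
      have h4 : (1:F) - q * q ^ (n - k) ≠ 0 :=
        factor_ne (hP ((n-k)+1) (by omega)) (Nat.lt_succ_self (n-k))
      have h4' : (1:F) - q ^ (n - k) * q ≠ 0 := by rwa [mul_comm]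
      field_simp
    -- second sum
    have hB : ∑ k ∈ Finset.range (n + 2),
        (-b) ^ k * q ^ (k.choose 2) * (q ^ (n + 1 - k) * (1 - q ^ k)) /
          (qPochF q q k * qPochF q q (n + 1 - k) * (1 - q * q ^ n))
        = (-b * q ^ n) * ((qPochF b q n / qPochF q q n) / (1 - q * q ^ n)) := by
      rw [Finset.sum_range_succ']
      have hfirst : (-b) ^ 0 * q ^ ((0:ℕ).choose 2) * (q ^ (n + 1 - 0) * (1 - q ^ (0:ℕ))) /
          (qPochF q q 0 * qPochF q q (n + 1 - 0) * (1 - q * q ^ n)) = 0 := by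
        simp
      rw [hfirst, add_zero, ← ih hq', Finset.sum_div, Finset.mul_sum]
      refine Finset.sum_congr rfl fun i hi => ?_
      rw [Finset.mem_range] at hi
      obtain ⟨m, hm⟩ : ∃ m, n = i + m := ⟨n - i, by omega⟩
      have h1 : n + 1 - (i + 1) = m := by omega
      have h2 : qPochF q q i ≠ 0 := hP i (by omega)
      have h3 : qPochF q q m ≠ 0 := hP m (by omega)
      have h4 : (1:F) - q * q ^ i ≠ 0 := factor_ne (hP (i+1) (by omega)) (Nat.lt_succ_self i)
      have h5 : n - i = m := by omega
      rw [h1, h5, choose_succ_two, qPochF_succ, hm]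
      have hc' : (1:F) - q * (q ^ i * q ^ m) ≠ 0 := by
        rw [← pow_add, ← hm]; exact hc
      simp only [pow_add, pow_succ, pow_zero, one_mul]
      have h4' : (1:F) - q ^ i * q ≠ 0 := by rwa [mul_comm]
      field_simp
    rw [hA, hB, qPochF_succ b, qPochF_succ q]
    have h5 : qPochF q q n ≠ 0 := hP n (by omega)
    field_simp
    ring

-- exponent recurrence
lemma exp_rec {n k : ℕ} (hk : k ≤ n) :
    (n + 1 - k) * (n + 1 + k - 1) / 2 = (n - k) * (n + k - 1) / 2 + n := by
  have he : (n + 1 - k) * (n + 1 + k - 1) = (n - k) * (n + k - 1) + n * 2 := by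
    rcases Nat.eq_zero_or_pos (n + k) with h | h
    · have hn : n = 0 := by omega
      have hk0 : k = 0 := by omega
      subst hn; subst hk0; rfl
    · zify [hk, show k ≤ n + 1 by omega, show 1 ≤ n + k from h, show 1 ≤ n + 1 + k by omega]
      ring
  rw [he, Nat.add_mul_div_right _ _ (by norm_num : (0:ℕ) < 2)]

lemma L_rec (a b q : F) (n : ℕ) :
    ∑ k ∈ Finset.range (n + 1 + 1),
        qPochF a q k * qPochF b q k / qPochF q q k * (-(a * b)) ^ (n + 1 - k) *
          q ^ ((n + 1 - k) * (n + 1 + k - 1) / 2)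
      = -(a * b) * q ^ n *
          ∑ k ∈ Finset.range (n + 1),
            qPochF a q k * qPochF b q k / qPochF q q k * (-(a * b)) ^ (n - k) *
              q ^ ((n - k) * (n + k - 1) / 2)
        + qPochF a q (n + 1) * qPochF b q (n + 1) / qPochF q q (n + 1) := by
  rw [Finset.sum_range_succ, Finset.mul_sum]
  congr 1
  · refine Finset.sum_congr rfl fun k hk => ?_
    rw [Finset.mem_range] at hk
    have hk' : k ≤ n := by omega
    rw [exp_rec hk', pow_add, show n + 1 - k = (n - k) + 1 from by omega, pow_succ]
    ring
  · simp

lemma R_rec (a b q : F) (n : ℕ) (hq : ∀ k ≤ n + 1, qPochF q q k ≠ 0)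
    (ha : ∀ k ≤ n + 1, 1 - a * q ^ k ≠ 0) :
    ∑ k ∈ Finset.range (n + 1 + 1),
        qPochF a q (n + 1 + 1) * (-b) ^ k * q ^ (Nat.choose k 2) /
          (qPochF q q k * qPochF q q (n + 1 - k) * (1 - a * q ^ (n + 1 - k)))
      = -(a * b) * q ^ n *
          ∑ k ∈ Finset.range (n + 1),
            qPochF a q (n + 1) * (-b) ^ k * q ^ (Nat.choose k 2) /
              (qPochF q q k * qPochF q q (n - k) * (1 - a * q ^ (n - k)))
        + qPochF a q (n + 1) * qPochF b q (n + 1) / qPochF q q (n + 1) := by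
  rw [mul_div_assoc, ← qbin b q (n + 1) hq, Finset.sum_range_succ' _ (n + 1),
    Finset.sum_range_succ' _ (n + 1), mul_add, Finset.mul_sum, Finset.mul_sum,
    ← add_assoc, ← Finset.sum_add_distrib]
  congr 1
  · refine Finset.sum_congr rfl fun i hi => ?_
    rw [Finset.mem_range] at hi
    obtain ⟨m, hm⟩ : ∃ m, n = i + m := ⟨n - i, by omega⟩
    have h1 : n + 1 - (i + 1) = m := by omega
    have h5 : n - i = m := by omega
    have h2 : qPochF q q i ≠ 0 := hq i (by omega)
    have h3 : qPochF q q m ≠ 0 := hq m (by omega)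
    have h4 : (1:F) - q * q ^ i ≠ 0 := factor_ne (hq (i + 1) (by omega)) (Nat.lt_succ_self i)
    have h6 : (1:F) - a * q ^ m ≠ 0 := ha m (by omega)
    rw [h1, h5, choose_succ_two, qPochF_succ a q (n + 1), qPochF_succ q q i, hm]
    have h7 : (1:F) - a * (q ^ i * q ^ m * q) ≠ 0 := by
      have := ha (n + 1) le_rfl
      rw [hm] at this
      rwa [show q ^ (i + m + 1) = q ^ i * q ^ m * q from by rw [pow_succ, pow_add]] at this
    simp only [pow_add, pow_succ, pow_zero, one_mul]
    have h4' : (1:F) - q ^ i * q ≠ 0 := by rwa [mul_comm]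
    field_simp
    ring
  · have h2 : qPochF q q (n + 1) ≠ 0 := hq (n + 1) le_rfl
    have h3 : (1:F) - a * q ^ (n + 1) ≠ 0 := ha (n + 1) le_rfl
    rw [show n + 1 + 1 = (n + 1) + 1 from rfl, qPochF_succ a q (n + 1)]
    simp only [Nat.sub_zero, pow_zero, Nat.choose_zero_right, mul_one, one_mul]
    rw [show qPochF q q 0 = 1 from rfl]
    field_simp

end CarlitzAux

/-- Carlitz's identity, as an identity of rational functions in `a, b, q`
(stated for elements of an arbitrary field with the denominators nonvanishing). -/
theorem carlitz_identity {F : Type*} [Field F] (n : ℕ) (a b q : F)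
    (hq : ∀ k ≤ n, qPochF q q k ≠ 0) (ha : ∀ k ≤ n, 1 - a * q ^ k ≠ 0) :
    ∑ k ∈ Finset.range (n + 1),
        qPochF a q k * qPochF b q k / qPochF q q k * (-(a * b)) ^ (n - k) *
          q ^ ((n - k) * (n + k - 1) / 2) =
      ∑ k ∈ Finset.range (n + 1),
        qPochF a q (n + 1) * (-b) ^ k * q ^ (Nat.choose k 2) /
          (qPochF q q k * qPochF q q (n - k) * (1 - a * q ^ (n - k))) := by
  induction n with
  | zero =>
      have h := ha 0 le_rfl
      simp only [pow_zero, mul_one] at h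
      simp [qPochF]
      field_simp
  | succ n ih =>
      have hq' : ∀ k ≤ n, qPochF q q k ≠ 0 := fun k hk => hq k (by omega)
      have ha' : ∀ k ≤ n, 1 - a * q ^ k ≠ 0 := fun k hk => ha k (by omega)
      rw [L_rec a b q n, R_rec a b q n hq ha, ih hq' ha']
end

section
/- Let n be a positive integer. Then the central q-binomial coefficient [2n choose n]_q satisfies [2n choose n]_q ≡ 2 - n(1 - q^n) (mod Φ_n(q)^2). -/
open Finset Polynomial

section Aux

lemma expand_prod {R : Type*} [CommRing R] (s : Finset ℕ) (a c : ℕ → R) (t : R) :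
    ∃ r, ∏ i ∈ s, (a i + t * c i) =
      ∏ i ∈ s, a i + t * ∑ i ∈ s, c i * ∏ j ∈ s.erase i, a j + t ^ 2 * r := by
  classical
  induction s using Finset.induction_on with
  | empty => exact ⟨0, by simp⟩
  | @insert k s' hk ih =>
    obtain ⟨r, hr⟩ := ih
    refine ⟨c k * ∑ i ∈ s', c i * ∏ j ∈ s'.erase i, a j + r * (a k + t * c k), ?_⟩
    rw [Finset.prod_insert hk, hr, Finset.prod_insert hk, Finset.sum_insert hk,
      Finset.erase_insert hk]
    have hcong : ∀ i ∈ s', c i * ∏ j ∈ (insert k s').erase i, a j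
        = a k * (c i * ∏ j ∈ s'.erase i, a j) := by
      intro i hi
      have hik : k ≠ i := fun h => hk (h ▸ hi)
      rw [Finset.erase_insert_of_ne hik, Finset.prod_insert
        (fun h => hk (Finset.mem_of_mem_erase h))]
      ring
    rw [Finset.sum_congr rfl hcong, ← Finset.mul_sum]
    ring

lemma phi_not_dvd {n m : ℕ} (hn : 0 < n) (hm : 0 < m) (hmn : m < n) :
    ¬ cyclotomic n ℚ ∣ (X ^ m - 1 : ℚ[X]) := by
  intro hdvd
  set ζ : ℂ := Complex.exp (2 * Real.pi * Complex.I / n)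
  have hζ : IsPrimitiveRoot ζ n := Complex.isPrimitiveRoot_exp n hn.ne'
  have hdvd' : cyclotomic n ℂ ∣ (X ^ m - 1 : ℂ[X]) := by
    have := Polynomial.map_dvd (algebraMap ℚ ℂ) hdvd
    simpa [Polynomial.map_cyclotomic] using this
  obtain ⟨c, hc⟩ := hdvd'
  have h0 : eval ζ (cyclotomic n ℂ) = 0 := hζ.isRoot_cyclotomic hn
  have hroot : ζ ^ m - 1 = 0 := by
    have := congrArg (eval ζ) hc
    simpa [h0] using this
  have hdv : n ∣ m := (hζ.pow_eq_one_iff_dvd m).mp (by linear_combination hroot)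
  exact absurd (Nat.le_of_dvd hm hdv) (not_le.mpr hmn)

lemma phi_prime {n : ℕ} (hn : 0 < n) : Prime (cyclotomic n ℚ) :=
  (cyclotomic.irreducible_rat hn).prime

lemma phi_dvd_one_sub {n : ℕ} : cyclotomic n ℚ ∣ (1 - X ^ n : ℚ[X]) := by
  have := dvd_neg.mpr (cyclotomic.dvd_X_pow_sub_one n ℚ)
  rwa [neg_sub] at this

lemma pairing (n : ℕ) (hn : 0 < n) :
    cyclotomic n ℚ ∣
      2 * (∑ i ∈ range (n - 1), X ^ (i + 1) * ∏ j ∈ (range (n - 1)).erase i, (1 - X ^ (j + 1)))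
      + ((n : ℚ[X]) - 1) * ∏ j ∈ range (n - 1), (1 - X ^ (j + 1) : ℚ[X]) := by
  set Φ : ℚ[X] := cyclotomic n ℚ with hΦ
  set a : ℕ → ℚ[X] := fun j => 1 - X ^ (j + 1) with ha
  set s : Finset ℕ := range (n - 1) with hs
  set f : ℕ → ℚ[X] := fun i => X ^ (i + 1) * ∏ j ∈ s.erase i, a j with hf
  set D' : ℚ[X] := ∏ j ∈ s, a j with hD
  have hrefl : ∑ i ∈ s, f (n - 2 - i) = ∑ i ∈ s, f i := by
    have := Finset.sum_range_reflect f (n - 1)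
    simpa [Nat.sub_sub] using this
  have hconst : ((n : ℚ[X]) - 1) * D' = ∑ _i ∈ s, D' := by
    rw [Finset.sum_const, card_range, nsmul_eq_mul]
    congr 1
    push_cast [Nat.cast_sub hn]
    ring
  have hsplit : 2 * (∑ i ∈ s, f i) + ((n : ℚ[X]) - 1) * D'
      = ∑ i ∈ s, (f i + f (n - 2 - i) + D') := by
    rw [Finset.sum_add_distrib, Finset.sum_add_distrib, hrefl, hconst]
    ring
  rw [hsplit]
  refine Finset.dvd_sum ?_
  intro i hi
  have hilt : i < n - 1 := mem_range.mp hi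
  set i' : ℕ := n - 2 - i with hi'
  have hadd : (i + 1) + (i' + 1) = n := by omega
  have hi'mem : i' ∈ s := mem_range.mpr (by omega)
  by_cases hii : i = i'
  · have h2 : 2 * (i + 1) = n := by omega
    have hprod : f i + f i' + D' = (1 + X ^ (i + 1)) * ∏ j ∈ s.erase i, a j := by
      rw [← hii]
      simp only [hf, hD]
      rw [← Finset.mul_prod_erase s a hi]
      simp only [ha]
      ring
    rw [hprod]
    refine Dvd.dvd.mul_right ?_ _
    have hfact : (X ^ n - 1 : ℚ[X]) = (X ^ (i + 1) - 1) * (X ^ (i + 1) + 1) := by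
      rw [← h2]; ring
    have hdvd : Φ ∣ (X ^ (i + 1) - 1) * (X ^ (i + 1) + 1) := by
      rw [← hfact]; exact cyclotomic.dvd_X_pow_sub_one n ℚ
    have := (phi_prime hn).2.2 _ _ hdvd
    rcases this with h | h
    · exact absurd h (phi_not_dvd hn (Nat.succ_pos i) (by omega))
    · have := h; rwa [add_comm] at this
  · have hi'e : i' ∈ s.erase i := Finset.mem_erase.mpr ⟨Ne.symm hii, hi'mem⟩
    have hie : i ∈ s.erase i' := Finset.mem_erase.mpr ⟨hii, hi⟩
    set Q : ℚ[X] := ∏ j ∈ (s.erase i).erase i', a j with hQ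
    have e1 : ∏ j ∈ s.erase i, a j = a i' * Q := (Finset.mul_prod_erase _ a hi'e).symm
    have e2 : ∏ j ∈ s.erase i', a j = a i * Q := by
      rw [← Finset.mul_prod_erase _ a hie, Finset.erase_right_comm]
    have hpow : (X : ℚ[X]) ^ (i + 1) * X ^ (i' + 1) = X ^ n := by
      rw [← pow_add, hadd]
    have hkey : f i + f i' + D' = (1 - X ^ n) * Q := by
      simp only [hf, hD]
      rw [e1, e2, ← Finset.mul_prod_erase s a hi, e1]
      simp only [ha]
      linear_combination (-Q) * hpow
    rw [hkey]
    exact Dvd.dvd.mul_right phi_dvd_one_sub _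

end Aux


/-- The `q`-shifted factorial `(a; q)_m = (1-a)(1-aq)⋯(1-aq^(m-1))` in `ℚ(q)`. -/
noncomputable def qPoch (a q : RatFunc ℚ) (m : ℕ) : RatFunc ℚ :=
  ∏ i ∈ Finset.range m, (1 - a * q ^ i)

/-- Congruence `A ≡ B (mod Φ_n(q)^e)` in the localization of `ℚ[q]` at `(Φ_n(q))`:
the difference, cleared of a denominator coprime to `Φ_n(q)`, is divisible by `Φ_n(q)^e`. -/
def qCongruent (n e : ℕ) (A B : RatFunc ℚ) : Prop :=
  ∃ f g : Polynomial ℚ, ¬ Polynomial.cyclotomic n ℚ ∣ g ∧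
    (A - B) * algebraMap (Polynomial ℚ) (RatFunc ℚ) g =
      algebraMap (Polynomial ℚ) (RatFunc ℚ) (Polynomial.cyclotomic n ℚ ^ e * f)

/-- For every positive integer `n`, the central Gaussian binomial coefficient satisfies
`[2n choose n]_q ≡ 2 - n(1 - qⁿ) (mod Φ_n(q)²)`. -/
theorem central_qbinom_congruence (n : ℕ) (hn : 0 < n) :
    qCongruent n 2
      (qPoch RatFunc.X RatFunc.X (2 * n) / (qPoch RatFunc.X RatFunc.X n) ^ 2)
      (2 - (n : RatFunc ℚ) * (1 - RatFunc.X ^ n)) := by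
  classical
  set Φ : ℚ[X] := cyclotomic n ℚ with hΦdef
  have hprime : Prime Φ := phi_prime hn
  set a : ℕ → ℚ[X] := fun i => 1 - X ^ (i + 1) with ha
  set t : ℚ[X] := 1 - X ^ n with htdef
  set D : ℚ[X] := ∏ i ∈ range n, a i with hDdef
  set N : ℚ[X] := ∏ i ∈ range (2 * n), a i with hNdef
  set D' : ℚ[X] := ∏ i ∈ range (n - 1), a i with hD'def
  set T : ℚ[X] := ∑ i ∈ range (n - 1), X ^ (i + 1) * ∏ j ∈ (range (n - 1)).erase i, a j
    with hTdef
  set Btil : ℚ[X] := 2 - (n : ℚ[X]) * t with hBtildef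
  have hn1 : n - 1 + 1 = n := Nat.succ_pred_eq_of_pos hn
  -- Step 1 : N = D * M
  have h1 : N = D * ∏ i ∈ range n, (a i + t * X ^ (i + 1)) := by
    rw [hNdef, two_mul, Finset.prod_range_add]
    congr 1
    refine Finset.prod_congr rfl fun i _ => ?_
    simp only [ha, htdef]
    rw [show n + i + 1 = n + (i + 1) by ring, pow_add]
    ring
  -- Step 2 : M = P * (t * (2 - t))
  have h2 : ∏ i ∈ range n, (a i + t * X ^ (i + 1))
      = (∏ i ∈ range (n - 1), (a i + t * X ^ (i + 1))) * (t * (2 - t)) := by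
    rw [← hn1, Finset.prod_range_succ]
    congr 1
    simp only [ha, htdef, hn1]
    ring
  -- Step 3 : D = D' * t
  have h3 : D = D' * t := by
    have hps := Finset.prod_range_succ a (n - 1)
    rw [hn1] at hps
    rw [hDdef, hps]
    congr 1
    simp only [ha, htdef]
    rw [hn1]
  -- Step 4 : expansion of P
  obtain ⟨R, h4⟩ := expand_prod (range (n - 1)) a (fun i => X ^ (i + 1)) t
  -- Step 5 : pairing
  have h5 : Φ ∣ 2 * T + ((n : ℚ[X]) - 1) * D' := pairing n hn
  -- key identity
  have hident : N - Btil * D ^ 2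
      = t ^ 3 * ((2 * T + ((n : ℚ[X]) - 1) * D') * D')
        + t ^ 4 * (D' * (2 * R - T - t * R)) := by
    rw [h1, h2, h4, h3, hBtildef]
    ring
  have hkey : Φ ^ 4 ∣ N - Btil * D ^ 2 := by
    rw [hident]
    refine dvd_add ?_ ?_
    · have : Φ ^ 3 * Φ ∣ t ^ 3 * (2 * T + ((n : ℚ[X]) - 1) * D') :=
        mul_dvd_mul (pow_dvd_pow_of_dvd phi_dvd_one_sub 3) h5
      rw [show (Φ ^ 4) = Φ ^ 3 * Φ by ring]
      have h6 : t ^ 3 * ((2 * T + ((n : ℚ[X]) - 1) * D') * D')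
          = t ^ 3 * (2 * T + ((n : ℚ[X]) - 1) * D') * D' := by ring
      rw [h6]
      exact this.mul_right _
    · exact Dvd.dvd.mul_right (pow_dvd_pow_of_dvd phi_dvd_one_sub 4) _
  obtain ⟨F, hF⟩ := hkey
  -- the denominator
  have hsq : Squarefree (X ^ n - 1 : ℚ[X]) := by
    have := (separable_X_pow_sub_C (1 : ℚ) (by exact_mod_cast hn.ne') one_ne_zero).squarefree
    simpa using this
  obtain ⟨v, hv⟩ := cyclotomic.dvd_X_pow_sub_one n ℚ
  have hΦv : ¬ Φ ∣ v := by
    intro ⟨v', hv'⟩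
    have : Φ * Φ ∣ (X ^ n - 1 : ℚ[X]) := ⟨v', by rw [hv, hv']; ring⟩
    exact hprime.not_unit (hsq Φ this)
  have ht : t = Φ * (-v) := by
    rw [htdef]
    linear_combination (-1 : ℚ[X]) * hv
  set g : ℚ[X] := v ^ 2 * D' ^ 2 with hgdef
  have hD2 : D ^ 2 = Φ ^ 2 * g := by
    rw [h3, ht, hgdef]; ring
  have hΦD' : ¬ Φ ∣ D' := by
    intro h
    obtain ⟨j, hj, hdvd⟩ := (hprime.dvd_finset_prod_iff a).mp h
    have hjn : j + 1 < n := by have := mem_range.mp hj; omega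
    have : Φ ∣ (X ^ (j + 1) - 1 : ℚ[X]) := by
      have := dvd_neg.mpr hdvd
      rw [ha] at this
      simpa [neg_sub] using this
    exact phi_not_dvd hn (Nat.succ_pos j) hjn this
  have hg : ¬ Φ ∣ g := by
    intro h
    rcases hprime.2.2 _ _ h with h | h
    · exact hΦv (hprime.dvd_of_dvd_pow h)
    · exact hΦD' (hprime.dvd_of_dvd_pow h)
  -- RatFunc part
  set φ := algebraMap (Polynomial ℚ) (RatFunc ℚ) with hφ
  have hfac : ∀ m : ℕ, qPoch RatFunc.X RatFunc.X m = φ (∏ i ∈ range m, a i) := by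
    intro m
    rw [qPoch, map_prod]
    refine Finset.prod_congr rfl fun i _ => ?_
    rw [ha]
    simp only [map_sub, map_one, map_pow, hφ, RatFunc.algebraMap_X]
    ring
  have hDne : φ D ≠ 0 := by
    refine RatFunc.algebraMap_ne_zero ?_
    intro h
    have : (D : ℚ[X]).eval 0 = 1 := by
      rw [hDdef, eval_prod]
      simp [ha]
    rw [h] at this
    simp at this
  have hB : (2 - (n : RatFunc ℚ) * (1 - RatFunc.X ^ n)) = φ Btil := by
    rw [hBtildef, htdef]
    simp only [map_sub, map_mul, map_one, map_pow, map_natCast, map_ofNat, hφ,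
      RatFunc.algebraMap_X]
  have hA : qPoch RatFunc.X RatFunc.X (2 * n) / (qPoch RatFunc.X RatFunc.X n) ^ 2
      = φ N / (φ D) ^ 2 := by
    rw [hfac, hfac, hNdef, hDdef]
  refine ⟨F, g, hg, ?_⟩
  rw [hA, hB]
  have hΦ2ne : φ (Φ ^ 2) ≠ 0 :=
    RatFunc.algebraMap_ne_zero (pow_ne_zero 2 hprime.ne_zero)
  apply mul_left_cancel₀ hΦ2ne
  have hsub : (φ N / (φ D) ^ 2 - φ Btil) * φ (D ^ 2) = φ (N - Btil * D ^ 2) := by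
    have e : φ (N - Btil * D ^ 2) = φ N - φ Btil * φ (D ^ 2) := by
      rw [map_sub φ N (Btil * D ^ 2), map_mul]
    rw [e, map_pow, sub_mul, div_mul_cancel₀ _ (pow_ne_zero 2 hDne)]
  calc φ (Φ ^ 2) * ((φ N / (φ D) ^ 2 - φ Btil) * φ g)
      = (φ N / (φ D) ^ 2 - φ Btil) * (φ (Φ ^ 2) * φ g) := by ring
    _ = (φ N / (φ D) ^ 2 - φ Btil) * φ (Φ ^ 2 * g) := by rw [← map_mul]
    _ = (φ N / (φ D) ^ 2 - φ Btil) * φ (D ^ 2) := by rw [← hD2]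
    _ = φ (N - Btil * D ^ 2) := hsub
    _ = φ (Φ ^ 2) * φ (Φ ^ 2 * F) := by
        rw [hF, ← map_mul]
        refine congrArg φ ?_
        ring
  -- note : goal expects φ (cyclotomic n ℚ ^ 2 * F)
end

section
/- Specialization of Carlitz's identity: for every positive integer n, sum_{k=0}^{n-1} ((q; q^2)_k (-1; q^2)_k / (q^2; q^2)_k) * q^((n-1)^2 - k^2) = sum_{k=0}^{n-1} (q; q^2)_n * q^(k^2 - k) / ((q^2; q^2)_k (q^2; q^2)_{n-k-1} (1 - q^(2n-2k-1))), as rational functions of q. -/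
open Finset Polynomial

namespace Carlitz

noncomputable abbrev q : RatFunc ℚ := RatFunc.X

lemma q_pow_ne_one {m : ℕ} (hm : 0 < m) : q ^ m ≠ 1 := by
  intro h
  have h1 : algebraMap (Polynomial ℚ) (RatFunc ℚ) (Polynomial.X ^ m) =
      algebraMap (Polynomial ℚ) (RatFunc ℚ) 1 := by
    simpa [map_pow, RatFunc.algebraMap_X] using h
  have h2 : (Polynomial.X : Polynomial ℚ) ^ m = 1 :=
    RatFunc.algebraMap_injective ℚ h1
  have h3 := congrArg (Polynomial.eval (2:ℚ)) h2
  simp at h3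
  have : (2:ℚ) ^ m ≥ 2 ^ 1 := by
    apply pow_le_pow_right₀ (by norm_num) hm
  rw [h3] at this; norm_num at this

lemma one_sub_ne {m : ℕ} (hm : 0 < m) : (1 : RatFunc ℚ) - q ^ m ≠ 0 :=
  sub_ne_zero.mpr fun h => q_pow_ne_one hm h.symm

noncomputable def E (k : ℕ) : RatFunc ℚ := qPoch (q^2) (q^2) k
noncomputable def O (n : ℕ) : RatFunc ℚ := qPoch q (q^2) n
noncomputable def M (n : ℕ) : RatFunc ℚ := qPoch (-1) (q^2) n
noncomputable def A (k : ℕ) : RatFunc ℚ := O k * M k / E k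

lemma E_zero : E 0 = 1 := by simp [E, qPoch]
lemma O_zero : O 0 = 1 := by simp [O, qPoch]
lemma M_zero : M 0 = 1 := by simp [M, qPoch]

lemma E_succ (k : ℕ) : E (k+1) = E k * (1 - q^(2*k+2)) := by
  rw [E, E, qPoch, qPoch, Finset.prod_range_succ]
  ring

lemma O_succ (k : ℕ) : O (k+1) = O k * (1 - q^(2*k+1)) := by
  rw [O, O, qPoch, qPoch, Finset.prod_range_succ]
  ring

lemma M_succ (k : ℕ) : M (k+1) = M k * (1 + q^(2*k)) := by
  rw [M, M, qPoch, qPoch, Finset.prod_range_succ]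
  ring

lemma E_ne (k : ℕ) : E k ≠ 0 := by
  rw [E, qPoch]
  apply Finset.prod_ne_zero_iff.mpr
  intro i _
  have : (1:RatFunc ℚ) - q^2 * (q^2)^i = 1 - q^(2*i+2) := by ring
  rw [this]
  exact one_sub_ne (by omega)

lemma O_ne (k : ℕ) : O k ≠ 0 := by
  rw [O, qPoch]
  apply Finset.prod_ne_zero_iff.mpr
  intro i _
  have : (1:RatFunc ℚ) - q * (q^2)^i = 1 - q^(2*i+1) := by ring
  rw [this]
  exact one_sub_ne (by omega)

lemma qb (n : ℕ) :
    ∑ j ∈ Finset.range (n+1), q ^ (j*(j-1)) * (E n / (E j * E (n-j))) = M n := by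
  induction n with
  | zero => simp [E_zero, M_zero]
  | succ n ih =>
    have key : ∀ i ∈ Finset.range n,
        q ^ ((i+1)*i) * (E (n+1) / (E (i+1) * E (n+1-(i+1)))) =
          q ^ ((i+1)*i) * (E n / (E (i+1) * E (n-(i+1)))) +
            q ^ (2*n) * (q ^ (i*(i-1)) * (E n / (E i * E (n-i)))) := by
      intro i hi
      rw [Finset.mem_range] at hi
      obtain ⟨d, rfl⟩ : ∃ d, n = i + d + 1 := ⟨n - i - 1, by omega⟩
      have e1 : i + d + 1 + 1 - (i+1) = d + 1 := by omega
      have e2 : i + d + 1 - (i+1) = d := by omega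
      have e3 : i + d + 1 - i = d + 1 := by omega
      have e4 : (i+1)*i = i*(i-1) + 2*i := by
        cases i with
        | zero => simp
        | succ s => simp [Nat.succ_sub_one]; ring
      rw [e1, e2, e3, e4]
      rw [show i + d + 1 + 1 = (i + d + 1) + 1 from rfl, E_succ (i+d+1),
        E_succ i, E_succ d]
      have h1 := E_ne i
      have h2 := E_ne d
      have h3 := E_ne (i+d+1)
      have h4 := one_sub_ne (m := 2*i+2) (by omega)
      have h5 := one_sub_ne (m := 2*d+2) (by omega)
      field_simp
      ring
    rw [Finset.sum_range_succ, Finset.sum_range_succ']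
    simp only [Nat.add_sub_cancel]
    rw [Finset.sum_congr rfl key, Finset.sum_add_distrib]
    have top : q ^ ((n+1)*n) * (E (n+1) / (E (n+1) * E (n+1-(n+1)))) =
        q ^ (2*n) * (q ^ (n*(n-1)) * (E n / (E n * E (n-n)))) := by
      have e1 : (n+1)*n = 2*n + n*(n-1) := by
        cases n with
        | zero => simp
        | succ s => simp [Nat.succ_sub_one]; ring
      rw [e1, Nat.sub_self, Nat.sub_self, E_zero, mul_one, mul_one,
        div_self (E_ne (n+1)), div_self (E_ne n), pow_add]
      ring
    have bot : q ^ ((0:ℕ)*(0-1)) * (E n / (E 0 * E (n-0))) = 1 := by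
      simp [E_zero, div_self (E_ne n)]
    have bot2 : q ^ ((0:ℕ)*(0-1)) * (E (n+1) / (E 0 * E (n+1-0))) = 1 := by
      simp [E_zero, div_self (E_ne (n+1))]
    rw [bot2, top, ← Finset.mul_sum]
    have hsum1 : (∑ i ∈ Finset.range n, q ^ ((i+1)*i) * (E n / (E (i+1) * E (n-(i+1))))) +
        1 = M n := by
      rw [← bot, ← ih, Finset.sum_range_succ']
      simp only [Nat.add_sub_cancel]
    have hsum2 : (∑ i ∈ Finset.range n, q ^ (i*(i-1)) * (E n / (E i * E (n-i)))) +
        q ^ (n*(n-1)) * (E n / (E n * E (n-n))) = M n := by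
      rw [← ih, Finset.sum_range_succ]
    rw [M_succ]
    linear_combination hsum1 + q ^ (2*n) * hsum2

/-- Reversed-index right-hand side. -/
noncomputable def R (n : ℕ) : RatFunc ℚ :=
  ∑ j ∈ Finset.range n,
    O n * q ^ ((n-1-j)*(n-2-j)) / (E j * E (n-1-j) * (1 - q ^ (2*j+1)))

lemma tsum (n : ℕ) :
    ∑ j ∈ Finset.range (n+1), O n * q ^ ((n-j)*(n-1-j)) / (E j * E (n-j)) = A n := by
  have refl : ∑ j ∈ Finset.range (n+1), q ^ ((n-j)*(n-1-j)) * (E n / (E j * E (n-j))) =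
      ∑ j ∈ Finset.range (n+1), q ^ (j*(j-1)) * (E n / (E j * E (n-j))) := by
    rw [← Finset.sum_range_reflect (fun j => q ^ (j*(j-1)) * (E n / (E j * E (n-j)))) (n+1)]
    apply Finset.sum_congr rfl
    intro j hj
    rw [Finset.mem_range] at hj
    have e1 : n + 1 - 1 - j = n - j := by omega
    have e2 : (n-j) - 1 = n - 1 - j := by omega
    have e3 : n - (n - j) = j := by omega
    rw [e1, e2, e3, mul_comm (E (n-j)) (E j)]
  have step : ∀ j ∈ Finset.range (n+1),
      O n * q ^ ((n-j)*(n-1-j)) / (E j * E (n-j)) =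
        (O n / E n) * (q ^ ((n-j)*(n-1-j)) * (E n / (E j * E (n-j)))) := by
    intro j _
    have h1 := E_ne n
    have h2 := E_ne j
    have h3 := E_ne (n-j)
    field_simp
  rw [Finset.sum_congr rfl step, ← Finset.mul_sum, refl, qb, A]
  have h1 := E_ne n
  field_simp

lemma Rrec (m : ℕ) : R (m+2) = q ^ (2*m+1) * R (m+1) + A (m+1) := by
  have key : ∀ j ∈ Finset.range (m+1),
      O (m+2) * q ^ ((m+2-1-j)*(m+2-2-j)) / (E j * E (m+2-1-j) * (1 - q ^ (2*j+1))) =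
        q ^ (2*m+1) * (O (m+1) * q ^ ((m+1-1-j)*(m+1-2-j)) /
            (E j * E (m+1-1-j) * (1 - q ^ (2*j+1)))) +
          O (m+1) * q ^ ((m+1-j)*(m+1-1-j)) / (E j * E (m+1-j)) := by
    intro j hj
    rw [Finset.mem_range] at hj
    obtain ⟨d, rfl⟩ : ∃ d, m = j + d := ⟨m - j, by omega⟩
    have e1 : j + d + 2 - 1 - j = d + 1 := by omega
    have e2 : j + d + 2 - 2 - j = d := by omega
    have e3 : j + d + 1 - 1 - j = d := by omega
    have e4 : j + d + 1 - 2 - j = d - 1 := by omega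
    have e5 : j + d + 1 - j = d + 1 := by omega
    rw [e1, e2, e3, e4, e5]
    have e6 : (d+1)*d = d*(d-1) + 2*d := by
      cases d with
      | zero => simp
      | succ s => simp [Nat.succ_sub_one]; ring
    rw [e6]
    rw [show j + d + 2 = (j + d + 1) + 1 from rfl, O_succ (j+d+1), E_succ d]
    have h1 := E_ne j
    have h2 := E_ne d
    have h3 := one_sub_ne (m := 2*j+1) (by omega)
    have h4 := one_sub_ne (m := 2*d+2) (by omega)
    field_simp
    ring
  have top : O (m+2) * q ^ ((m+2-1-(m+1))*(m+2-2-(m+1))) /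
      (E (m+1) * E (m+2-1-(m+1)) * (1 - q ^ (2*(m+1)+1))) =
        O (m+1) * q ^ ((m+1-(m+1))*(m+1-1-(m+1))) / (E (m+1) * E (m+1-(m+1))) := by
    have e1 : m + 2 - 1 - (m+1) = 0 := by omega
    have e2 : m + 2 - 2 - (m+1) = 0 := by omega
    have e3 : m + 1 - (m+1) = 0 := by omega
    have e4 : m + 1 - 1 - (m+1) = 0 := by omega
    rw [e1, e2, e3, e4, O_succ (m+1), E_zero]
    have h1 := E_ne (m+1)
    have h2 := one_sub_ne (m := 2*(m+1)+1) (by omega)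
    field_simp
  simp only [R]
  rw [Finset.sum_range_succ, Finset.sum_congr rfl key, Finset.sum_add_distrib, top,
    ← Finset.mul_sum, add_assoc, ← Finset.sum_range_succ, tsum (m+1)]

noncomputable def L (n : ℕ) : RatFunc ℚ :=
  ∑ k ∈ Finset.range n, A k * q ^ ((n-1)^2 - k^2)

lemma Lrec (m : ℕ) : L (m+2) = q ^ (2*m+1) * L (m+1) + A (m+1) := by
  have key : ∀ k ∈ Finset.range (m+1),
      A k * q ^ ((m+2-1)^2 - k^2) =
        q ^ (2*m+1) * (A k * q ^ ((m+1-1)^2 - k^2)) := by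
    intro k hk
    rw [Finset.mem_range] at hk
    have h1 : k^2 ≤ m^2 := Nat.pow_le_pow_left (by omega) 2
    have h2 : (m+1)^2 = m^2 + 2*m + 1 := by ring
    have e1 : m + 2 - 1 = m + 1 := by omega
    have e2 : m + 1 - 1 = m := by omega
    have e3 : (m+1)^2 - k^2 = (2*m+1) + (m^2 - k^2) := by omega
    rw [e1, e2, e3, pow_add]
    ring
  rw [L, Finset.sum_range_succ, Finset.sum_congr rfl key, ← Finset.mul_sum, L]
  have e4 : (m+2-1)^2 - (m+1)^2 = 0 := by
    rw [show m+2-1 = m+1 by omega]; exact Nat.sub_self _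
  rw [e4, pow_zero, mul_one]

lemma main (m : ℕ) : L (m+1) = R (m+1) := by
  induction m with
  | zero =>
    rw [L, R]
    simp only [Finset.sum_range_succ, Finset.sum_range_zero, zero_add]
    have hO : O 1 = 1 - q ^ 1 := by
      rw [show (1:ℕ) = 0 + 1 from rfl, O_succ, O_zero, one_mul]
    simp only [A, O_zero, M_zero, E_zero, hO]
    norm_num
    have h := one_sub_ne (m := 1) one_pos
    rw [pow_one] at h
    rw [E_zero, one_mul, div_self h]
  | succ m ih =>
    rw [show m + 1 + 1 = m + 2 from rfl, Lrec, Rrec, ih]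

end Carlitz

/-- Specialization of Carlitz's identity (`q → q²`, `a = q`, `b = -1`, `n → n-1`):
for every positive integer `n`, as rational functions of `q`. -/
theorem carlitz_specialization_one (n : ℕ) (hn : 0 < n) :
    ∑ k ∈ Finset.range n,
        qPoch RatFunc.X (RatFunc.X ^ 2) k * qPoch (-1) (RatFunc.X ^ 2) k /
          qPoch (RatFunc.X ^ 2) (RatFunc.X ^ 2) k * RatFunc.X ^ ((n - 1) ^ 2 - k ^ 2) =
      ∑ k ∈ Finset.range n,
        qPoch RatFunc.X (RatFunc.X ^ 2) n * RatFunc.X ^ (k ^ 2 - k) /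
          (qPoch (RatFunc.X ^ 2) (RatFunc.X ^ 2) k *
            qPoch (RatFunc.X ^ 2) (RatFunc.X ^ 2) (n - k - 1) *
            (1 - RatFunc.X ^ (2 * n - 2 * k - 1))) := by
  obtain ⟨m, rfl⟩ : ∃ m, n = m + 1 := ⟨n - 1, by omega⟩
  have hL : (∑ k ∈ Finset.range (m+1),
      qPoch RatFunc.X (RatFunc.X ^ 2) k * qPoch (-1) (RatFunc.X ^ 2) k /
        qPoch (RatFunc.X ^ 2) (RatFunc.X ^ 2) k * RatFunc.X ^ ((m + 1 - 1) ^ 2 - k ^ 2)) =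
      Carlitz.L (m+1) := rfl
  have hR : Carlitz.R (m+1) = ∑ k ∈ Finset.range (m+1),
      Carlitz.O (m+1) * Carlitz.q ^ (k ^ 2 - k) /
        (Carlitz.E k * Carlitz.E (m + 1 - k - 1) *
          (1 - Carlitz.q ^ (2 * (m + 1) - 2 * k - 1))) := by
    rw [Carlitz.R, ← Finset.sum_range_reflect (fun k =>
      Carlitz.O (m+1) * Carlitz.q ^ (k ^ 2 - k) /
        (Carlitz.E k * Carlitz.E (m + 1 - k - 1) *
          (1 - Carlitz.q ^ (2 * (m + 1) - 2 * k - 1)))) (m+1)]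
    apply Finset.sum_congr rfl
    intro j hj
    rw [Finset.mem_range] at hj
    have e0 : m + 1 - 1 - j = m - j := by omega
    have e0' : m + 1 - 2 - j = m - j - 1 := by omega
    have e2 : m + 1 - (m - j) - 1 = j := by omega
    have e3 : 2 * (m + 1) - 2 * (m - j) - 1 = 2 * j + 1 := by omega
    have esq : (m - j) ^ 2 - (m - j) = (m - j) * (m - j - 1) := by
      rcases Nat.eq_zero_or_pos (m - j) with h | h
      · simp [h]
      · obtain ⟨s, hs⟩ : ∃ s, m - j = s + 1 := ⟨m - j - 1, by omega⟩
        rw [hs]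
        have : (s+1)^2 = (s+1)*s + (s+1) := by ring
        have h2 : (s+1+1-1) = s+1 := by omega
        simp only [Nat.add_sub_cancel]
        omega
    rw [e0, e0', e2, e3, esq, mul_comm (Carlitz.E (m-j)) (Carlitz.E j)]
  rw [hL, Carlitz.main m, hR]
  rfl
end

section
/- Specialization of Carlitz's identity: for every positive integer n, sum_{k=0}^{n-1} ((q; q^2)_k (-q^2; q^2)_k / (q^2; q^2)_k) * q^(n^2 - (k+1)^2) = sum_{k=0}^{n-1} (q; q^2)_n * q^(k^2 + k) / ((q^2; q^2)_k (q^2; q^2)_{n-k-1} (1 - q^(2n-2k-1))), as rational functions of q. -/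
open Finset Polynomial

local notation "XQ" => (RatFunc.X : RatFunc ℚ)

lemma X_pow_ne_one {m : ℕ} (hm : m ≠ 0) : (XQ) ^ m ≠ 1 := by
  intro h
  have : (Polynomial.X : Polynomial ℚ) ^ m = 1 := by
    apply RatFunc.algebraMap_injective ℚ
    simpa [map_pow, RatFunc.algebraMap_X] using h
  have := congrArg Polynomial.natDegree this
  simp [Polynomial.natDegree_X_pow] at this
  exact hm this

lemma one_sub_X_pow_ne {m : ℕ} (hm : m ≠ 0) : (1 : RatFunc ℚ) - XQ ^ m ≠ 0 := by
  intro h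
  exact X_pow_ne_one hm (by linear_combination -h)

lemma one_add_X_pow_ne (m : ℕ) : (1 : RatFunc ℚ) + XQ ^ m ≠ 0 := by
  intro h
  have : (Polynomial.X : Polynomial ℚ) ^ m = -1 := by
    apply RatFunc.algebraMap_injective ℚ
    rw [map_pow, RatFunc.algebraMap_X, map_neg, map_one]
    linear_combination h
  have h2 := congrArg (fun p => Polynomial.coeff p m) this
  by_cases hm : m = 0
  · subst hm; norm_num at h2
  · simp [Polynomial.coeff_X_pow, Polynomial.coeff_one, hm] at h2

lemma X_sub_X_pow_ne {m : ℕ} (hm : m ≠ 1) : XQ - XQ ^ m ≠ 0 := by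
  intro h
  have : (Polynomial.X : Polynomial ℚ) = Polynomial.X ^ m := by
    apply RatFunc.algebraMap_injective ℚ
    rw [map_pow, RatFunc.algebraMap_X]
    linear_combination h
  have := congrArg Polynomial.natDegree this
  simp [Polynomial.natDegree_X_pow] at this
  exact hm this.symm

noncomputable def Pq (m : ℕ) : RatFunc ℚ := qPoch (XQ ^ 2) (XQ ^ 2) m
noncomputable def Nq (m : ℕ) : RatFunc ℚ := qPoch (-(XQ ^ 2)) (XQ ^ 2) m
noncomputable def Aq (m : ℕ) : RatFunc ℚ := qPoch XQ (XQ ^ 2) m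

lemma pow_two_pow (i : ℕ) : ((XQ ^ 2) ^ i : RatFunc ℚ) = XQ ^ (2 * i) := by
  rw [← pow_mul]

lemma Pq_zero : Pq 0 = 1 := by simp [Pq, qPoch]
lemma Nq_zero : Nq 0 = 1 := by simp [Nq, qPoch]

lemma Pq_succ (m : ℕ) : Pq (m + 1) = Pq m * (1 - XQ ^ (2 * m + 2)) := by
  rw [Pq, qPoch, Finset.prod_range_succ, pow_two_pow, ← pow_add]
  rw [show 2 + 2 * m = 2 * m + 2 by ring]
  rfl

lemma Nq_succ (m : ℕ) : Nq (m + 1) = Nq m * (1 + XQ ^ (2 * m + 2)) := by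
  rw [Nq, qPoch, Finset.prod_range_succ, show ∀ x : RatFunc ℚ, 1 - -(XQ^2) * x = 1 + XQ^2 * x by intro x; ring, pow_two_pow, ← pow_add]
  rw [show 2 + 2 * m = 2 * m + 2 by ring]
  rfl

lemma Aq_succ (m : ℕ) : Aq (m + 1) = Aq m * (1 - XQ ^ (2 * m + 1)) := by
  rw [Aq, qPoch, Finset.prod_range_succ, pow_two_pow]
  rw [show (XQ : RatFunc ℚ) * XQ ^ (2*m) = XQ ^ (2 * m + 1) by rw [pow_succ, mul_comm]]
  rfl

lemma Pq_ne (m : ℕ) : Pq m ≠ 0 := by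
  rw [Pq, qPoch]
  rw [Finset.prod_ne_zero_iff]
  intro i _
  rw [pow_two_pow, ← pow_add]
  exact one_sub_X_pow_ne (by omega)

lemma Nq_ne (m : ℕ) : Nq m ≠ 0 := by
  rw [Nq, qPoch]
  rw [Finset.prod_ne_zero_iff]
  intro i _
  rw [show ∀ x : RatFunc ℚ, 1 - -(XQ^2) * x = 1 + XQ^2 * x by intro x; ring, pow_two_pow, ← pow_add]
  exact one_add_X_pow_ne _

lemma Aq_ne (m : ℕ) : Aq m ≠ 0 := by
  rw [Aq, qPoch]
  rw [Finset.prod_ne_zero_iff]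
  intro i _
  rw [pow_two_pow, show (XQ : RatFunc ℚ) * XQ ^ (2*i) = XQ ^ (2 * i + 1) by rw [pow_succ, mul_comm]]
  exact one_sub_X_pow_ne (by omega)

noncomputable def nnf (q s t : RatFunc ℚ) : RatFunc ℚ :=
  q - 2*q^2*s*t - s + (q+q^2+q^3)*s^2*t - q^3*s^3*t

noncomputable def gnf (q s t : RatFunc ℚ) : RatFunc ℚ :=
  q*s^4*t^2 + q^2*s^2*t - s^3*t^2 - 2*q*s^3*t^2 - q*s^4*t^3
  + s*t - q*s*t - q^2*s*t + s^2*t^2 + s^3*t^3 + 2*q*s^3*t^3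
  - s*t^2 + q*s*t^2 + q^2*s*t^2 - s^2*t^3 - q^2*s^2*t^3

noncomputable def Wf (n k : ℕ) : RatFunc ℚ :=
  XQ^(k^2-k) * XQ^(2*k) * nnf XQ (XQ^(2*(n-k))) (XQ^(2*k)) * Pq n /
    (Pq k * Pq (n-k) * (1 - XQ^(2*(n-k)+1)) * (XQ - XQ^(2*(n-k))) * Nq n)

noncomputable def Gf (n k : ℕ) : RatFunc ℚ :=
  XQ^(k^2-k) * gnf XQ (XQ^(2*(n+1-k))) (XQ^(2*k)) * Pq n /
    (Pq k * Pq (n+1-k) * (XQ - XQ^(2*(n+1-k))) * (1 - XQ^(2*(n+1-k)+1)) * (1 + XQ^(2*n+2)) * Nq n)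

lemma step_cert (n k : ℕ) (hk : k ≤ n) :
    Wf (n+1) k = Wf n k + (Gf n (k+1) - Gf n k) := by
  have hkk : (k+1)^2 - (k+1) = (k^2 - k) + 2*k := by
    have h1 : k ≤ k^2 := Nat.le_self_pow two_ne_zero k
    have h2 : (k+1)^2 = k^2 + 2*k + 1 := by ring
    omega
  simp only [Wf, Gf]
  rw [show n+1-k = (n-k)+1 by omega, show n+1-(k+1) = n-k by omega,
      show 2*((n-k)+1) = 2*(n-k)+2 by ring, show 2*(k+1) = 2*k+2 by ring,
      hkk, Pq_succ (n-k), Pq_succ n, Nq_succ n, Pq_succ k,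
      show 2*n+2 = 2*(n-k)+(2*k+2) by omega]
  have hq : (XQ : RatFunc ℚ) ≠ 0 := RatFunc.X_ne_zero
  have h1 : 1 - XQ^(2*(n-k)) * XQ ≠ 0 := by
    have := one_sub_X_pow_ne (m := 2*(n-k)+1) (by omega)
    rwa [pow_add, pow_one] at this
  have h2 : XQ - XQ^(2*(n-k)) ≠ 0 := X_sub_X_pow_ne (by omega)
  have h3 : 1 - XQ^(2*(n-k)) * XQ^2 ≠ 0 := by
    have := one_sub_X_pow_ne (m := 2*(n-k)+2) (by omega)
    rwa [pow_add] at this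
  have h4 : 1 - XQ^(2*(n-k)) * XQ^3 ≠ 0 := by
    have := one_sub_X_pow_ne (m := 2*(n-k)+3) (by omega)
    rwa [pow_add] at this
  have h5 : 1 - XQ^(2*k) * XQ^2 ≠ 0 := by
    have := one_sub_X_pow_ne (m := 2*k+2) (by omega)
    rwa [pow_add] at this
  have h6 : 1 + XQ^(2*(n-k)) * (XQ^(2*k) * XQ^2) ≠ 0 := by
    have := one_add_X_pow_ne (2*(n-k)+(2*k+2))
    rwa [pow_add, pow_add] at this
  have h7 : XQ - XQ^(2*(n-k)) * XQ^2 ≠ 0 := by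
    have := X_sub_X_pow_ne (m := 2*(n-k)+2) (by omega)
    rwa [pow_add] at this
  have hpa := Pq_ne k
  have hpb := Pq_ne (n-k)
  have hpn := Pq_ne n
  have hqn := Nq_ne n
  simp only [pow_add, pow_one]
  revert hq h1 h2 h3 h4 h5 h6 h7 hpa hpb hpn hqn
  generalize XQ^(k^2-k) = e
  generalize XQ^(2*(n-k)) = s
  generalize XQ^(2*k) = t
  generalize Pq k = pa
  generalize Pq (n-k) = pb
  generalize Pq n = pn
  generalize Nq n = qn
  intro hq h1 h2 h3 h4 h5 h6 h7 hpa hpb hpn hqn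
  simp only [nnf, gnf]
  have h4' : 1 - s * RatFunc.X ^ 2 * RatFunc.X ≠ 0 := fun hc => h4 (by linear_combination hc)
  have dA0 : pa * pb * (1 - s * RatFunc.X) * (RatFunc.X - s) * qn ≠ 0 := by
    apply_rules [mul_ne_zero]
  have dB0 : pa * (1 - t * RatFunc.X ^ 2) * pb * (RatFunc.X - s) * (1 - s * RatFunc.X) *
      (1 + s * (t * RatFunc.X ^ 2)) * qn ≠ 0 := by apply_rules [mul_ne_zero]
  have dC0 : pa * (pb * (1 - s * RatFunc.X ^ 2)) * (RatFunc.X - s * RatFunc.X ^ 2) *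
      (1 - s * RatFunc.X ^ 2 * RatFunc.X) * (1 + s * (t * RatFunc.X ^ 2)) * qn ≠ 0 := by
    apply_rules [mul_ne_zero]
  have dL0 : pa * (pb * (1 - s * RatFunc.X ^ 2)) * (1 - s * RatFunc.X ^ 2 * RatFunc.X) *
      (RatFunc.X - s * RatFunc.X ^ 2) * (qn * (1 + s * (t * RatFunc.X ^ 2))) ≠ 0 := by
    apply_rules [mul_ne_zero]
  rw [div_sub_div _ _ dB0 dC0, div_add_div _ _ dA0 (mul_ne_zero dB0 dC0),
      div_eq_div_iff dL0 (mul_ne_zero dA0 (mul_ne_zero dB0 dC0))]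
  ring

lemma Gf_zero (n : ℕ) : Gf n 0 = 0 := by
  rw [Gf]
  rw [show (0:ℕ)^2 - 0 = 0 by rfl, show 2*0 = 0 by rfl, pow_zero]
  rw [show gnf XQ (XQ^(2*(n+1-0))) 1 = 0 by rw [gnf]; ring]
  simp

lemma boundary (n : ℕ) : Wf (n+1) (n+1) = - Gf n (n+1) := by
  simp only [Wf, Gf]
  rw [show n+1-(n+1) = 0 by omega]
  rw [show 2*0 = 0 by rfl, pow_zero, Pq_zero, Pq_succ n, Nq_succ n,
      show 2*(n+1) = 2*n+2 by ring]
  have hq : (XQ : RatFunc ℚ) ≠ 0 := RatFunc.X_ne_zero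
  have h1 : (1:RatFunc ℚ) - XQ ≠ 0 := by
    have := one_sub_X_pow_ne (m := 1) (by omega)
    rwa [pow_one] at this
  have h2 : XQ - (1:RatFunc ℚ) ≠ 0 := by
    have := X_sub_X_pow_ne (m := 0) (by omega)
    rwa [pow_zero] at this
  have h3 : 1 - XQ^(2*n+2) ≠ 0 := one_sub_X_pow_ne (by omega)
  have h4 : 1 + XQ^(2*n+2) ≠ 0 := one_add_X_pow_ne _
  have hpn := Pq_ne n
  have hqn := Nq_ne n
  revert h3 h4 hpn hqn
  generalize XQ^((n+1)^2-(n+1)) = e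
  generalize XQ^(2*n+2) = t
  generalize Pq n = pn
  generalize Nq n = qn
  intro h3 h4 hpn hqn
  simp only [nnf, gnf, pow_one]
  have d1 : pn * (1-t) * 1 * (1 - XQ^(0+1)) * (XQ - 1) * (qn * (1+t)) ≠ 0 := by
    rw [pow_succ, pow_zero, one_mul]
    apply_rules [mul_ne_zero, one_ne_zero]
  have d2 : pn * (1-t) * 1 * (XQ - 1) * (1 - XQ^(0+1)) * (1+t) * qn ≠ 0 := by
    rw [pow_succ, pow_zero, one_mul]
    apply_rules [mul_ne_zero, one_ne_zero]
  rw [eq_comm, neg_eq_iff_eq_neg, eq_comm, ← neg_div, div_eq_div_iff d1 d2]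
  ring

lemma master (n : ℕ) : ∑ k ∈ Finset.range (n+1), Wf n k = 1 := by
  induction n with
  | zero =>
    rw [Finset.sum_range_one, Wf]
    rw [show (0:ℕ)^2 - 0 = 0 by rfl, Nat.sub_self, show 2*0 = 0 by rfl, pow_zero,
        Pq_zero, Nq_zero, nnf]
    have h1 : (1:RatFunc ℚ) - XQ ≠ 0 := by
      have := one_sub_X_pow_ne (m := 1) (by omega)
      rwa [pow_one] at this
    have h2 : XQ - (1:RatFunc ℚ) ≠ 0 := by
      have := X_sub_X_pow_ne (m := 0) (by omega)
      rwa [pow_zero] at this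
    rw [div_eq_one_iff_eq (by simp only [pow_succ, pow_zero, one_mul]; apply_rules [mul_ne_zero, one_ne_zero])]
    ring
  | succ n ih =>
    rw [Finset.sum_range_succ]
    have hcongr : ∑ k ∈ Finset.range (n+1), Wf (n+1) k
        = ∑ k ∈ Finset.range (n+1), (Wf n k + (Gf n (k+1) - Gf n k)) := by
      refine Finset.sum_congr rfl fun k hk => ?_
      exact step_cert n k (by simpa using Nat.lt_succ_iff.mp (Finset.mem_range.mp hk))
    rw [hcongr, Finset.sum_add_distrib, ih, Finset.sum_range_sub (fun k => Gf n k), Gf_zero,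
        boundary]
    ring

noncomputable def Sle (n : ℕ) : RatFunc ℚ :=
  ∑ k ∈ Finset.range n,
    qPoch RatFunc.X (RatFunc.X ^ 2) k * qPoch (-(RatFunc.X ^ 2)) (RatFunc.X ^ 2) k /
      qPoch (RatFunc.X ^ 2) (RatFunc.X ^ 2) k * RatFunc.X ^ (n ^ 2 - (k + 1) ^ 2)

noncomputable def Tle (n : ℕ) : RatFunc ℚ :=
  ∑ k ∈ Finset.range n,
    qPoch RatFunc.X (RatFunc.X ^ 2) n * RatFunc.X ^ (k ^ 2 + k) /
      (qPoch (RatFunc.X ^ 2) (RatFunc.X ^ 2) k * qPoch (RatFunc.X ^ 2) (RatFunc.X ^ 2) (n - k - 1) *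
        (1 - RatFunc.X ^ (2 * n - 2 * k - 1)))

lemma tau_eq (n k : ℕ) :
    qPoch RatFunc.X (RatFunc.X ^ 2) n * RatFunc.X ^ (k ^ 2 + k) /
      (qPoch (RatFunc.X ^ 2) (RatFunc.X ^ 2) k * qPoch (RatFunc.X ^ 2) (RatFunc.X ^ 2) (n - k - 1) *
        (1 - RatFunc.X ^ (2 * n - 2 * k - 1)))
    = Aq n * XQ ^ (k^2+k) / (Pq k * Pq (n-k-1) * (1 - XQ^(2*n-2*k-1))) := rfl

lemma hksq (k : ℕ) : k^2 + k = (k^2 - k) + 2*k := by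
  have h1 : k ≤ k^2 := Nat.le_self_pow two_ne_zero k
  have h2 : k^2 + k = k^2 + k := rfl
  omega

lemma frac3 (A B C DL D1 D2 : RatFunc ℚ) (hL : DL ≠ 0) (h1 : D1 ≠ 0) (h2 : D2 ≠ 0)
    (h : A * (D1 * D2) = (B * D2 + C * D1) * DL) : A / DL = B / D1 + C / D2 := by
  rw [div_add_div _ _ h1 h2, div_eq_div_iff hL (mul_ne_zero h1 h2)]
  linear_combination h

lemma frac2 (A C DL D2 : RatFunc ℚ) (hL : DL ≠ 0) (h2 : D2 ≠ 0)
    (h : A * D2 = C * DL) : A / DL = C / D2 := by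
  rw [div_eq_div_iff hL h2]; exact h

lemma link1 (n k : ℕ) (hk : k < n) :
    Aq (n+1) * XQ ^ (k^2+k) / (Pq k * Pq ((n+1)-k-1) * (1 - XQ^(2*(n+1)-2*k-1)))
    = XQ^(2*n+1) * (Aq n * XQ ^ (k^2+k) / (Pq k * Pq (n-k-1) * (1 - XQ^(2*n-2*k-1))))
      + Aq n * (Nq n / Pq n) * Wf n k := by
  rw [Wf]
  generalize hm : n - k - 1 = m
  rw [show (n+1)-k-1 = m+1 by omega, show 2*(n+1)-2*k-1 = 2*m+3 by omega,
      show 2*n-2*k-1 = 2*m+1 by omega, show n-k = m+1 by omega,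
      show 2*(m+1) = 2*m+2 by ring,
      Pq_succ m, Aq_succ n, hksq k,
      show 2*n+1 = 2*m+(2*k+3) by omega]
  have hq : (XQ : RatFunc ℚ) ≠ 0 := RatFunc.X_ne_zero
  have h1 : 1 - XQ^(2*m) * XQ ≠ 0 := by
    have := one_sub_X_pow_ne (m := 2*m+1) (by omega)
    rwa [pow_add, pow_one] at this
  have h2 : 1 - XQ^(2*m) * XQ^2 ≠ 0 := by
    have := one_sub_X_pow_ne (m := 2*m+2) (by omega)
    rwa [pow_add] at this
  have h3 : 1 - XQ^(2*m) * XQ^3 ≠ 0 := by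
    have := one_sub_X_pow_ne (m := 2*m+3) (by omega)
    rwa [pow_add] at this
  have h4 : XQ - XQ^(2*m) * XQ^2 ≠ 0 := by
    have := X_sub_X_pow_ne (m := 2*m+2) (by omega)
    rwa [pow_add] at this
  have hpa := Pq_ne k
  have hpb := Pq_ne m
  have hpn := Pq_ne n
  have hqn := Nq_ne n
  have han := Aq_ne n
  simp only [pow_add, pow_one]
  revert hq h1 h2 h3 h4 hpa hpb hpn hqn han
  generalize XQ^(k^2-k) = e
  generalize XQ^(2*m) = s
  generalize XQ^(2*k) = t
  generalize Pq k = pa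
  generalize Pq m = pb
  generalize Pq n = pn
  generalize Nq n = qn
  generalize Aq n = an
  intro hq h1 h2 h3 h4 hpa hpb hpn hqn han
  simp only [nnf]
  rw [← mul_div_assoc, ← mul_div_assoc,
      show ∀ a b c d f : RatFunc ℚ, a*(b/c)*d/f = a*b*d/(c*f) from fun a b c d f => by ring]
  apply frac3
  · have h2' : 1 - s * XQ^2 * XQ ≠ 0 := fun hc => h3 (by linear_combination hc)
    apply_rules [mul_ne_zero]
  · apply_rules [mul_ne_zero]
  · have h2' : 1 - s * XQ^2 * XQ ≠ 0 := fun hc => h3 (by linear_combination hc)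
    apply_rules [mul_ne_zero]
  · ring

lemma link2 (n : ℕ) :
    Aq (n+1) * XQ ^ (n^2+n) / (Pq n * Pq ((n+1)-n-1) * (1 - XQ^(2*(n+1)-2*n-1)))
    = Aq n * (Nq n / Pq n) * Wf n n := by
  rw [Wf]
  rw [show (n+1)-n-1 = 0 by omega, show 2*(n+1)-2*n-1 = 1 by omega, Nat.sub_self n,
      Pq_zero, pow_one, Aq_succ n, hksq n, show 2*0 = 0 by rfl, pow_zero,
      show 2*n+1 = 2*n+1 by rfl]
  have hq : (XQ : RatFunc ℚ) ≠ 0 := RatFunc.X_ne_zero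
  have h1 : (1:RatFunc ℚ) - XQ ≠ 0 := by
    have := one_sub_X_pow_ne (m := 1) (by omega)
    rwa [pow_one] at this
  have h2 : XQ - (1:RatFunc ℚ) ≠ 0 := by
    have := X_sub_X_pow_ne (m := 0) (by omega)
    rwa [pow_zero] at this
  have hpn := Pq_ne n
  have hqn := Nq_ne n
  have han := Aq_ne n
  simp only [pow_add, pow_one]
  revert hq h1 h2 hpn hqn han
  generalize XQ^(n^2-n) = e
  generalize XQ^(2*n) = t
  generalize Pq n = pn
  generalize Nq n = qn
  generalize Aq n = an
  intro hq h1 h2 hpn hqn han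
  simp only [nnf]
  rw [show ∀ a b c d f : RatFunc ℚ, a*(b/c)*(d/f) = a*b*d/(c*f) from fun a b c d f => by ring]
  apply frac2
  · apply_rules [mul_ne_zero, one_ne_zero]
  · have h1' : 1 - XQ^(0+1) ≠ 0 := by
      rwa [pow_succ, pow_zero, one_mul]
    apply_rules [mul_ne_zero, one_ne_zero]
  · simp only [pow_succ, pow_zero, one_mul]
    ring

lemma Trec (n : ℕ) : Tle (n+1) = XQ^(2*n+1) * Tle n + Aq n * (Nq n / Pq n) := by
  rw [Tle, Tle, Finset.sum_range_succ]
  have hcongr : ∑ k ∈ Finset.range n, (qPoch RatFunc.X (RatFunc.X ^ 2) (n+1) * RatFunc.X ^ (k ^ 2 + k) /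
      (qPoch (RatFunc.X ^ 2) (RatFunc.X ^ 2) k * qPoch (RatFunc.X ^ 2) (RatFunc.X ^ 2) ((n+1) - k - 1) *
        (1 - RatFunc.X ^ (2 * (n+1) - 2 * k - 1))))
      = ∑ k ∈ Finset.range n, (XQ^(2*n+1) * (qPoch RatFunc.X (RatFunc.X ^ 2) n * RatFunc.X ^ (k ^ 2 + k) /
      (qPoch (RatFunc.X ^ 2) (RatFunc.X ^ 2) k * qPoch (RatFunc.X ^ 2) (RatFunc.X ^ 2) (n - k - 1) *
        (1 - RatFunc.X ^ (2 * n - 2 * k - 1)))) + Aq n * (Nq n / Pq n) * Wf n k) := by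
    refine Finset.sum_congr rfl fun k hk => ?_
    exact link1 n k (Finset.mem_range.mp hk)
  rw [hcongr, Finset.sum_add_distrib, ← Finset.mul_sum, ← Finset.mul_sum]
  rw [show qPoch RatFunc.X (RatFunc.X ^ 2) (n+1) * RatFunc.X ^ (n ^ 2 + n) /
      (qPoch (RatFunc.X ^ 2) (RatFunc.X ^ 2) n * qPoch (RatFunc.X ^ 2) (RatFunc.X ^ 2) ((n+1) - n - 1) *
        (1 - RatFunc.X ^ (2 * (n+1) - 2 * n - 1))) = Aq n * (Nq n / Pq n) * Wf n n from link2 n]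
  rw [add_assoc, ← mul_add, ← Finset.sum_range_succ (fun k => Wf n k) n, master n, mul_one]

lemma Srec (n : ℕ) : Sle (n+1) = XQ^(2*n+1) * Sle n + Aq n * (Nq n / Pq n) := by
  rw [Sle, Sle, Finset.sum_range_succ, Nat.sub_self, pow_zero, mul_one]
  have hcongr : ∑ k ∈ Finset.range n, (qPoch RatFunc.X (RatFunc.X ^ 2) k * qPoch (-(RatFunc.X ^ 2)) (RatFunc.X ^ 2) k /
      qPoch (RatFunc.X ^ 2) (RatFunc.X ^ 2) k * RatFunc.X ^ ((n+1) ^ 2 - (k + 1) ^ 2))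
      = ∑ k ∈ Finset.range n, (XQ^(2*n+1) * (qPoch RatFunc.X (RatFunc.X ^ 2) k * qPoch (-(RatFunc.X ^ 2)) (RatFunc.X ^ 2) k /
      qPoch (RatFunc.X ^ 2) (RatFunc.X ^ 2) k * RatFunc.X ^ (n ^ 2 - (k + 1) ^ 2))) := by
    refine Finset.sum_congr rfl fun k hk => ?_
    have hk' := Finset.mem_range.mp hk
    have h1 : (k+1)^2 ≤ n^2 := Nat.pow_le_pow_left (by omega) 2
    have hexp : (n+1)^2 - (k+1)^2 = (n^2 - (k+1)^2) + (2*n+1) := by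
      rw [show (n+1)^2 = n^2 + (2*n+1) by ring]
      exact Nat.sub_add_comm h1
    rw [hexp, pow_add]
    ring
  rw [hcongr, ← Finset.mul_sum, mul_div_assoc]
  rfl

lemma base : Sle 1 = Tle 1 := by
  have h1 : (1:RatFunc ℚ) - XQ ≠ 0 := by
    have := one_sub_X_pow_ne (m := 1) (by omega)
    rwa [pow_one] at this
  rw [Sle, Tle, Finset.sum_range_one, Finset.sum_range_one]
  simp only [qPoch, Finset.prod_range_zero, Finset.prod_range_one, pow_zero, mul_one, one_mul,
    Nat.sub_self]
  norm_num
  rw [div_self h1]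

lemma main_eq (n : ℕ) (hn : 1 ≤ n) : Sle n = Tle n := by
  induction n, hn using Nat.le_induction with
  | base => exact base
  | succ n hn ih => rw [Srec n, Trec n, ih]


/-- Specialization of Carlitz's identity (`q → q²`, `a = q`, `b = -q²`, `n → n-1`):
for every positive integer `n`, as rational functions of `q`. -/
theorem carlitz_specialization_two (n : ℕ) (hn : 0 < n) :
    ∑ k ∈ Finset.range n,
        qPoch RatFunc.X (RatFunc.X ^ 2) k * qPoch (-(RatFunc.X ^ 2)) (RatFunc.X ^ 2) k /
          qPoch (RatFunc.X ^ 2) (RatFunc.X ^ 2) k * RatFunc.X ^ (n ^ 2 - (k + 1) ^ 2) =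
      ∑ k ∈ Finset.range n,
        qPoch RatFunc.X (RatFunc.X ^ 2) n * RatFunc.X ^ (k ^ 2 + k) /
          (qPoch (RatFunc.X ^ 2) (RatFunc.X ^ 2) k *
            qPoch (RatFunc.X ^ 2) (RatFunc.X ^ 2) (n - k - 1) *
            (1 - RatFunc.X ^ (2 * n - 2 * k - 1))) := by
  exact main_eq n hn
end

section
/- Let n be a positive odd integer. Then the term a_{n,(n-1)/2} := (q;q^2)_n * q^((n^2-4n+3)/4) * [n-1 choose (n-1)/2]_{q^2} / ((1-q^n)(q^2;q^2)_{n-1}) satisfies a_{n,(n-1)/2} ≡ (-1)^((n-1)/2) * q^(1-n) * [2n choose n]_q / (1 + q^n) (mod Φ_n(q)^2). -/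
open Finset Polynomial

/-- split a product over `range (2*k)` into even/odd indexed parts -/
lemma prod_range_two_mul {M : Type*} [CommMonoid M] (k : ℕ) (f : ℕ → M) :
    ∏ i ∈ range (2 * k), f i = ∏ j ∈ range k, (f (2 * j) * f (2 * j + 1)) := by
  induction k with
  | zero => simp
  | succ k ih =>
      rw [show 2 * (k + 1) = 2 * k + 1 + 1 by ring, prod_range_succ, prod_range_succ,
        prod_range_succ, ih]
      exact mul_assoc _ _ _

/-- first-order expansion of a product modulo `t^2` -/
lemma prod_add_expansion {R : Type*} [CommRing R] (t : R) (a b : ℕ → R) (m : ℕ) :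
    ∃ r : R, ∏ j ∈ range m, (a j + t * b j) =
      ∏ j ∈ range m, a j
        + t * ∑ j ∈ range m, b j * ∏ i ∈ (range m).erase j, a i + t ^ 2 * r := by
  induction m with
  | zero => exact ⟨0, by simp⟩
  | succ m ih =>
      obtain ⟨r, hr⟩ := ih
      refine ⟨r * a m + (∑ j ∈ range m, b j * ∏ i ∈ (range m).erase j, a i) * b m
        + t * r * b m, ?_⟩
      have he : ∀ j ∈ range m, b j * ∏ i ∈ (range (m+1)).erase j, a i
          = a m * (b j * ∏ i ∈ (range m).erase j, a i) := by
        intro j hj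
        have hjm : j ≠ m := by have := mem_range.mp hj; omega
        rw [range_add_one, Finset.erase_insert_of_ne hjm.symm,
          Finset.prod_insert (fun h => by simpa using Finset.mem_of_mem_erase h)]
        ring
      rw [prod_range_succ, hr, sum_range_succ, Finset.sum_congr rfl he,
        show (range (m+1)).erase m = range m by rw [range_add_one, Finset.erase_insert (by simp)],
        prod_range_succ, ← Finset.mul_sum]
      ring

lemma one_sub_X_pow_ne_zero (m : ℕ) (hm : 0 < m) : (1 - X ^ m : ℚ[X]) ≠ 0 := by
  intro h
  have := congrArg (fun p : ℚ[X] => p.coeff m) h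
  simp [Polynomial.coeff_one, hm.ne'] at this

noncomputable def po (k : ℕ) : ℚ[X] := ∏ j ∈ range k, (1 - X ^ (2*j+1))
noncomputable def pe (k : ℕ) : ℚ[X] := ∏ j ∈ range k, (1 - X ^ (2*j+2))
noncomputable def psh1 (k : ℕ) : ℚ[X] := ∏ j ∈ range k, (1 - X ^ (2*k+2*j+2))
noncomputable def psh2 (k : ℕ) : ℚ[X] := ∏ j ∈ range k, (1 - X ^ (2*k+2*j+3))
noncomputable def Uk (k : ℕ) : ℚ[X] :=
  ∑ j ∈ range k, (-X ^ (2*j+1)) * ∏ i ∈ (range k).erase j, (1 - X ^ (2*i+1))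
noncomputable def Vk (k : ℕ) : ℚ[X] :=
  ∑ j ∈ range k, (-1) * ∏ i ∈ (range k).erase j, (X ^ (2*k+1) - X ^ (2*i+2))

lemma sum_aux (k : ℕ) : ∑ i ∈ range k, (2*i+2) = k*k+k := by
  induction k with
  | zero => simp
  | succ k ih => rw [sum_range_succ, ih]; ring

lemma hA0 (k : ℕ) :
    ∏ j ∈ range k, ((X:ℚ[X]) ^ (2*k+1) - X ^ (2*j+2)) = (-1)^k * X^(k*k+k) * po k := by
  calc ∏ j ∈ range k, ((X:ℚ[X]) ^ (2*k+1) - X ^ (2*j+2))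
      = ∏ j ∈ range k, (X ^ (2*j+2) * ((X:ℚ[X]) ^ (2*(k-1-j)+1) - 1)) := by
        refine prod_congr rfl fun j hj => ?_
        have hj' := mem_range.mp hj
        rw [mul_sub, mul_one, ← pow_add, show 2*j+2+(2*(k-1-j)+1) = 2*k+1 by omega]
    _ = (∏ j ∈ range k, (X:ℚ[X]) ^ (2*j+2)) *
          ∏ j ∈ range k, ((X:ℚ[X]) ^ (2*(k-1-j)+1) - 1) := prod_mul_distrib
    _ = X^(k*k+k) * ∏ j ∈ range k, ((X:ℚ[X]) ^ (2*j+1) - 1) := by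
        rw [prod_pow_eq_pow_sum, sum_aux,
          prod_range_reflect (fun j => (X:ℚ[X]) ^ (2*j+1) - 1) k]
    _ = X^(k*k+k) * ∏ j ∈ range k, ((-1) * (1 - (X:ℚ[X]) ^ (2*j+1))) := by
        rw [show (∏ j ∈ range k, ((X:ℚ[X]) ^ (2*j+1) - 1))
          = ∏ j ∈ range k, ((-1) * (1 - (X:ℚ[X]) ^ (2*j+1))) from
            prod_congr rfl fun j _ => by ring]
    _ = (-1)^k * X^(k*k+k) * po k := by
        rw [prod_mul_distrib, prod_const, card_range, po]; ring

lemma hPn (m d : ℕ) :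
    ∏ i ∈ (range (m+d+1)).erase d, ((X:ℚ[X]) ^ (2*(m+d)+3) - X ^ (2*i+2))
      = (-1)^(m+d) * X^((m+d)*(m+d)+(m+d)+2*m) *
          ∏ i ∈ (range (m+d+1)).erase m, (1 - (X:ℚ[X]) ^ (2*i+1)) := by
  set k := m + d + 1 with hk
  have hd : d ∈ range k := mem_range.mpr (by omega)
  have hm : m ∈ range k := mem_range.mpr (by omega)
  have hc : ((X:ℚ[X]) ^ (2*d+2) * (1 - X ^ (2*m+1))) ≠ 0 :=
    mul_ne_zero (pow_ne_zero _ X_ne_zero) (one_sub_X_pow_ne_zero _ (by omega))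
  have e1 : (X:ℚ[X]) ^ (2*d+2) * (1 - X ^ (2*m+1)) = -((X:ℚ[X]) ^ (2*(m+d)+3) - X ^ (2*d+2)) := by
    rw [mul_sub, mul_one, ← pow_add, show 2*d+2+(2*m+1) = 2*(m+d)+3 by omega]; ring
  have hA0' : ∏ j ∈ range k, ((X:ℚ[X]) ^ (2*(m+d)+3) - X ^ (2*j+2))
      = (-1)^k * X^(k*k+k) * po k := by
    have := hA0 k
    rw [show 2*k+1 = 2*(m+d)+3 by omega] at this
    exact this
  have hxx : (X:ℚ[X])^(2*d+2) * X^((m+d)*(m+d)+(m+d)+2*m) = X^(k*k+k) := by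
    rw [← pow_add]; congr 1; rw [hk]; ring
  have key2 : (1 - (X:ℚ[X]) ^ (2*m+1)) * ∏ i ∈ (range k).erase m, (1 - (X:ℚ[X]) ^ (2*i+1))
      = po k := Finset.mul_prod_erase (range k) (fun i => 1 - (X:ℚ[X]) ^ (2*i+1)) hm
  have hsign : ((-1:ℚ[X])^k) = -(-1)^(m+d) := by rw [hk, pow_succ]; ring
  apply mul_left_cancel₀ hc
  calc (X:ℚ[X]) ^ (2*d+2) * (1 - X ^ (2*m+1)) *
        ∏ i ∈ (range k).erase d, ((X:ℚ[X]) ^ (2*(m+d)+3) - X ^ (2*i+2))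
      = -(((X:ℚ[X]) ^ (2*(m+d)+3) - X ^ (2*d+2)) *
          ∏ i ∈ (range k).erase d, ((X:ℚ[X]) ^ (2*(m+d)+3) - X ^ (2*i+2))) := by
        rw [e1]; ring
    _ = -(∏ j ∈ range k, ((X:ℚ[X]) ^ (2*(m+d)+3) - X ^ (2*j+2))) := by
        rw [Finset.mul_prod_erase (range k)
          (fun i => (X:ℚ[X]) ^ (2*(m+d)+3) - X ^ (2*i+2)) hd]
    _ = (-1)^(m+d) * X^(k*k+k) * po k := by rw [hA0', hsign]; ring
    _ = (-1)^(m+d) * (X^(2*d+2) * X^((m+d)*(m+d)+(m+d)+2*m)) *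
          ((1 - (X:ℚ[X]) ^ (2*m+1)) *
            ∏ i ∈ (range k).erase m, (1 - (X:ℚ[X]) ^ (2*i+1))) := by
        rw [hxx, key2]
    _ = (X:ℚ[X]) ^ (2*d+2) * (1 - X ^ (2*m+1)) *
          ((-1)^(m+d) * X^((m+d)*(m+d)+(m+d)+2*m) *
            ∏ i ∈ (range k).erase m, (1 - (X:ℚ[X]) ^ (2*i+1))) := by ring

lemma hG (k : ℕ) : ((X:ℚ[X]) ^ (2*k+1) - 1) ∣ Vk k + (-1)^k * X^(k*(k+1)) * Uk k := by
  rw [Vk, Uk, mul_sum,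
    ← Finset.sum_range_reflect (fun j => (-1:ℚ[X]) * ∏ i ∈ (range k).erase j,
      ((X:ℚ[X]) ^ (2*k+1) - X ^ (2*i+2))) k, ← Finset.sum_add_distrib]
  apply Finset.dvd_sum
  intro m hm
  have hmk := mem_range.mp hm
  obtain ⟨d, hd⟩ : ∃ d, k = m + d + 1 := ⟨k - m - 1, by omega⟩
  subst hd
  rw [show m + d + 1 - 1 - m = d by omega]
  have h1 := hPn m d
  rw [show 2*(m+d)+3 = 2*(m+d+1)+1 by omega] at h1
  rw [h1]
  have hpow : (X:ℚ[X])^((m+d+1)*(m+d+1+1)) * X^(2*m+1)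
      = X^(2*(m+d+1)+1) * X^((m+d)*(m+d)+(m+d)+2*m) := by
    rw [← pow_add, ← pow_add]; congr 1; ring
  refine ⟨(-1)^(m+d) * X^((m+d)*(m+d)+(m+d)+2*m) *
    ∏ i ∈ (range (m+d+1)).erase m, (1 - (X:ℚ[X]) ^ (2*i+1)), ?_⟩
  rw [show ((-1:ℚ[X])^(m+d+1)) = -(-1)^(m+d) by rw [pow_succ]; ring]
  linear_combination ((-1:ℚ[X])^(m+d) *
    ∏ i ∈ (range (m+d+1)).erase m, (1 - (X:ℚ[X]) ^ (2*i+1))) * hpow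

lemma hD2 (k : ℕ) : ((X:ℚ[X]) ^ (2*k+1) - 1)^2 ∣
    X^(k*(k+1)) * (po k)^2 * (pe k) - (-1)^k * (psh1 k) * (pe k)^2 := by
  set t : ℚ[X] := X ^ (2*k+1) - 1 with ht
  obtain ⟨r₁, hr₁⟩ := prod_add_expansion t (fun j => 1 - (X:ℚ[X]) ^ (2*j+1))
    (fun j => -X ^ (2*j+1)) k
  have h1 : psh1 k = po k + t * Uk k + t^2 * r₁ := by
    rw [psh1, po, Uk, ← hr₁]
    refine prod_congr rfl fun j hj => ?_
    rw [show 2*k+2*j+2 = (2*k+1)+(2*j+1) by omega, pow_add]; ring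
  obtain ⟨r₂, hr₂⟩ := prod_add_expansion t (fun j => (X:ℚ[X]) ^ (2*k+1) - X ^ (2*j+2))
    (fun j => -1) k
  have h2 : pe k = (-1)^k * X^(k*(k+1)) * po k + t * Vk k + t^2 * r₂ := by
    rw [pe, show k*(k+1) = k*k+k by ring, ← hA0, Vk, ← hr₂]
    refine prod_congr rfl fun j hj => ?_
    ring
  obtain ⟨W₀, hW₀⟩ := hG k
  have hVk : Vk k = t * W₀ - (-1)^k * X^(k*(k+1)) * Uk k := by
    rw [← ht] at hW₀; linear_combination hW₀
  rcases Nat.even_or_odd k with hk | hk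
  · have hs : ((-1:ℚ[X]))^k = 1 := hk.neg_one_pow
    rw [hs] at h2 hVk ⊢
    rw [h1, h2, hVk]
    exact ⟨-(X^(k*(k+1)) * (po k)^2 * (W₀+r₂) + po k * (t*(W₀+r₂) - X^(k*(k+1)) * Uk k)^2
      + 2 * X^(k*(k+1)) * po k * Uk k * (t*(W₀+r₂) - X^(k*(k+1)) * Uk k)
      + t * Uk k * (t*(W₀+r₂) - X^(k*(k+1)) * Uk k)^2
      + r₁ * (X^(k*(k+1)) * po k + t * (t*(W₀+r₂) - X^(k*(k+1)) * Uk k))^2), by ring⟩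
  · have hs : ((-1:ℚ[X]))^k = -1 := hk.neg_one_pow
    rw [hs] at h2 hVk ⊢
    rw [h1, h2, hVk]
    exact ⟨-(X^(k*(k+1)) * (po k)^2 * (W₀+r₂) + (-1) * po k * (t*(W₀+r₂) + X^(k*(k+1)) * Uk k)^2
      + 2 * X^(k*(k+1)) * po k * Uk k * (t*(W₀+r₂) + X^(k*(k+1)) * Uk k)
      + (-1) * t * Uk k * (t*(W₀+r₂) + X^(k*(k+1)) * Uk k)^2
      + (-1) * r₁ * ((-1) * X^(k*(k+1)) * po k + t * (t*(W₀+r₂) + X^(k*(k+1)) * Uk k))^2), by ring⟩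

lemma one_add_X_pow_ne_zero (m : ℕ) (hm : 0 < m) : (1 + X ^ m : ℚ[X]) ≠ 0 := by
  intro h
  have := congrArg (fun p : ℚ[X] => p.coeff m) h
  simp [Polynomial.coeff_one, hm.ne'] at this

lemma hg₀ (k : ℕ) : ¬ (cyclotomic (2*k+1) ℚ ∣ X^(2*k) * (po k * pe k) * (pe k)^2) := by
  intro hdvd
  set np : ℕ+ := ⟨2*k+1, by omega⟩ with hnp
  have hnpv : (np : ℕ) = 2*k+1 := rfl
  set L := CyclotomicField np ℚ
  haveI : NeZero ((np : ℕ) : ℚ) := ⟨by rw [hnpv]; positivity⟩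
  haveI : IsCyclotomicExtension {(np : ℕ)} ℚ L := CyclotomicField.isCyclotomicExtension (np : ℕ) ℚ
  set ζ : L := IsCyclotomicExtension.zeta np ℚ L with hζdef
  have hζ : IsPrimitiveRoot ζ (2*k+1) := by
    have h := IsCyclotomicExtension.zeta_spec np ℚ L
    exact hnpv ▸ h
  have h0 : (Polynomial.aeval ζ) (cyclotomic (2*k+1) ℚ) = 0 := by
    rw [Polynomial.aeval_def, Polynomial.eval₂_eq_eval_map, Polynomial.map_cyclotomic]
    exact hζ.isRoot_cyclotomic (by omega)
  obtain ⟨c, hc⟩ := hdvd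
  have hzero : (Polynomial.aeval ζ) (X^(2*k) * (po k * pe k) * (pe k)^2) = 0 := by
    rw [hc, map_mul, h0, zero_mul]
  have hfac : ∀ m : ℕ, 0 < m → m < 2*k+1 → (1 : L) - ζ^m ≠ 0 := by
    intro m h1 h2
    have := hζ.pow_ne_one_of_pos_of_lt h1.ne' h2
    intro h; apply this; linear_combination -h
  have hpo : (Polynomial.aeval ζ) (po k) ≠ 0 := by
    rw [po, map_prod]
    refine Finset.prod_ne_zero_iff.mpr fun j hj => ?_
    have := mem_range.mp hj
    simpa using hfac (2*j+1) (by omega) (by omega)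
  have hpe : (Polynomial.aeval ζ) (pe k) ≠ 0 := by
    rw [pe, map_prod]
    refine Finset.prod_ne_zero_iff.mpr fun j hj => ?_
    have := mem_range.mp hj
    simpa using hfac (2*j+2) (by omega) (by omega)
  have hζ0 : ζ ≠ 0 := hζ.ne_zero (by omega)
  rw [map_mul, map_mul, map_pow, map_pow, aeval_X, map_mul] at hzero
  exact (mul_ne_zero (mul_ne_zero (pow_ne_zero _ hζ0) (mul_ne_zero hpo hpe))
    (pow_ne_zero _ hpe)) hzero

noncomputable def Fq (m : ℕ) : ℚ[X] := ∏ i ∈ range m, (1 - X ^ (i+1))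

lemma qPoch_odd (m : ℕ) :
    qPoch RatFunc.X (RatFunc.X ^ 2) m = algebraMap ℚ[X] (RatFunc ℚ) (po m) := by
  rw [qPoch, po, map_prod]
  refine prod_congr rfl fun i _ => ?_
  have h : RatFunc.X * ((RatFunc.X : RatFunc ℚ) ^ 2) ^ i = RatFunc.X ^ (2*i+1) := by
    rw [← pow_mul, pow_succ, mul_comm]
  rw [h, map_sub, map_one, map_pow, RatFunc.algebraMap_X]

lemma qPoch_even (m : ℕ) :
    qPoch (RatFunc.X ^ 2) (RatFunc.X ^ 2) m = algebraMap ℚ[X] (RatFunc ℚ) (pe m) := by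
  rw [qPoch, pe, map_prod]
  refine prod_congr rfl fun i _ => ?_
  have h : (RatFunc.X : RatFunc ℚ) ^ 2 * ((RatFunc.X : RatFunc ℚ) ^ 2) ^ i
      = RatFunc.X ^ (2*i+2) := by
    rw [← pow_mul, ← pow_add]; congr 1; omega
  rw [h, map_sub, map_one, map_pow, RatFunc.algebraMap_X]

lemma qPoch_q (m : ℕ) :
    qPoch RatFunc.X RatFunc.X m = algebraMap ℚ[X] (RatFunc ℚ) (Fq m) := by
  rw [qPoch, Fq, map_prod]
  refine prod_congr rfl fun i _ => ?_
  have h : (RatFunc.X : RatFunc ℚ) * (RatFunc.X : RatFunc ℚ) ^ i = RatFunc.X ^ (i+1) := by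
    rw [pow_succ, mul_comm]
  rw [h, map_sub, map_one, map_pow, RatFunc.algebraMap_X]

lemma hP1 (k : ℕ) : po (2*k+1) = po k * (1 - X^(2*k+1)) * psh2 k := by
  have h := Finset.prod_range_add (fun x => 1 - (X:ℚ[X])^(2*x+1)) (k+1) k
  rw [show (k+1)+k = 2*k+1 by ring] at h
  have h2 : ∏ x ∈ range k, (1 - (X:ℚ[X])^(2*(k+1+x)+1)) = psh2 k := by
    rw [psh2]
    refine prod_congr rfl fun j _ => ?_
    rw [show 2*(k+1+j)+1 = 2*k+2*j+3 by ring]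
  rw [po, h, prod_range_succ, h2]
  rfl

lemma hw (k : ℕ) : Fq (2*k) = po k * pe k := by
  rw [Fq, prod_range_two_mul k (fun i => 1 - (X:ℚ[X]) ^ (i+1)), po, pe, ← prod_mul_distrib]

lemma hF2k1 (k : ℕ) : Fq (2*k+1) = po k * pe k * (1 - X^(2*k+1)) := by
  rw [Fq, prod_range_succ, ← Fq, hw]

lemma hF4k2 (k : ℕ) : Fq (2*(2*k+1)) =
    (po k * pe k * (1 - X^(2*k+1))) *
      ((psh1 k * psh2 k) * ((1 - X^(2*k+1)) * (1 + X^(2*k+1)))) := by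
  have h := Finset.prod_range_add (fun x => 1 - (X:ℚ[X])^(x+1)) (2*k+1) (2*k+1)
  rw [show (2*k+1)+(2*k+1) = 2*(2*k+1) by ring] at h
  rw [Fq, h, ← Fq, hF2k1]
  congr 1
  rw [prod_range_succ]
  have h1 : ∏ x ∈ range (2*k), (1 - (X:ℚ[X]) ^ (2*k+1+x+1)) = psh1 k * psh2 k := by
    rw [prod_range_two_mul k (fun x => 1 - (X:ℚ[X]) ^ (2*k+1+x+1)), psh1, psh2,
      ← prod_mul_distrib]
    refine prod_congr rfl fun j _ => ?_
    rw [show 2*k+1+2*j+1 = 2*k+2*j+2 by ring, show 2*k+1+(2*j+1)+1 = 2*k+2*j+3 by ring]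
  have h2 : (1 : ℚ[X]) - X ^ (2*k+1+2*k+1) = (1 - X^(2*k+1)) * (1 + X^(2*k+1)) := by
    rw [show 2*k+1+2*k+1 = (2*k+1)+(2*k+1) by ring, pow_add]; ring
  rw [h1, h2]

lemma poly_ne (k : ℕ) : po k ≠ 0 ∧ (∀ m, pe m ≠ 0) ∧ (1 - X^(2*k+1) : ℚ[X]) ≠ 0 ∧
    (1 + X^(2*k+1) : ℚ[X]) ≠ 0 := by
  refine ⟨?_, fun m => ?_, one_sub_X_pow_ne_zero _ (by omega), one_add_X_pow_ne_zero _ (by omega)⟩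
  · rw [po]; exact Finset.prod_ne_zero_iff.mpr
      fun j _ => one_sub_X_pow_ne_zero _ (by omega)
  · rw [pe]; exact Finset.prod_ne_zero_iff.mpr
      fun j _ => one_sub_X_pow_ne_zero _ (by omega)

lemma hAmul (k e : ℕ) (he : e + 2*k = k*(k+1)) :
    (algebraMap ℚ[X] (RatFunc ℚ) (po k * (1 - X^(2*k+1)) * psh2 k) * RatFunc.X ^ e *
      (algebraMap ℚ[X] (RatFunc ℚ) (pe (2*k)) /
        (algebraMap ℚ[X] (RatFunc ℚ) (pe k) * algebraMap ℚ[X] (RatFunc ℚ) (pe k))) /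
      ((1 - RatFunc.X ^ (2*k+1)) * algebraMap ℚ[X] (RatFunc ℚ) (pe (2*k)))) *
      algebraMap ℚ[X] (RatFunc ℚ) (X^(2*k) * (po k * pe k) * (pe k)^2)
    = algebraMap ℚ[X] (RatFunc ℚ) (X^(k*(k+1)) * (po k * psh2 k) * (po k * pe k)) := by
  obtain ⟨hpo, hpe, hs, hs2⟩ := poly_ne k
  have hpo' := RatFunc.algebraMap_ne_zero hpo
  have hpek' := RatFunc.algebraMap_ne_zero (hpe k)
  have hpe2k' := RatFunc.algebraMap_ne_zero (hpe (2*k))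
  have hsR : (1 : RatFunc ℚ) - RatFunc.X ^ (2*k+1) ≠ 0 := by
    have := RatFunc.algebraMap_ne_zero hs
    simpa [map_sub, map_one, map_pow, RatFunc.algebraMap_X] using this
  rw [show (X:ℚ[X])^(k*(k+1)) = X^e * X^(2*k) by rw [← pow_add, he]]
  simp only [map_mul, map_sub, map_pow, map_one, RatFunc.algebraMap_X]
  field_simp

lemma hBmul (k : ℕ) :
    ((-1 : RatFunc ℚ)^k * (RatFunc.X ^ (2*k))⁻¹ *
      (algebraMap ℚ[X] (RatFunc ℚ) ((po k * pe k * (1 - X^(2*k+1))) *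
          ((psh1 k * psh2 k) * ((1 - X^(2*k+1)) * (1 + X^(2*k+1))))) /
        (algebraMap ℚ[X] (RatFunc ℚ) (po k * pe k * (1 - X^(2*k+1))))^2) /
      (1 + RatFunc.X ^ (2*k+1))) *
      algebraMap ℚ[X] (RatFunc ℚ) (X^(2*k) * (po k * pe k) * (pe k)^2)
    = algebraMap ℚ[X] (RatFunc ℚ) ((-1)^k * (psh1 k * psh2 k) * (pe k)^2) := by
  obtain ⟨hpo, hpe, hs, hs2⟩ := poly_ne k
  have hsR : (1 : RatFunc ℚ) - RatFunc.X ^ (2*k+1)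
      = algebraMap ℚ[X] (RatFunc ℚ) (1 - X^(2*k+1)) := by
    simp [map_sub, map_one, map_pow, RatFunc.algebraMap_X]
  have hs2R : (1 : RatFunc ℚ) + RatFunc.X ^ (2*k+1)
      = algebraMap ℚ[X] (RatFunc ℚ) (1 + X^(2*k+1)) := by
    simp [map_add, map_one, map_pow, RatFunc.algebraMap_X]
  have hx : (RatFunc.X : RatFunc ℚ) ≠ 0 := RatFunc.X_ne_zero
  have h1 := RatFunc.algebraMap_ne_zero hpo
  have h2 := RatFunc.algebraMap_ne_zero (hpe k)
  have h3 := RatFunc.algebraMap_ne_zero hs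
  have h4 := RatFunc.algebraMap_ne_zero hs2
  rw [hs2R]
  simp only [map_mul, map_pow, map_neg, map_one]
  rw [show algebraMap ℚ[X] (RatFunc ℚ) X = RatFunc.X from RatFunc.algebraMap_X]
  set a := algebraMap ℚ[X] (RatFunc ℚ) (po k) with ha
  set b := algebraMap ℚ[X] (RatFunc ℚ) (pe k) with hb
  set c1 := algebraMap ℚ[X] (RatFunc ℚ) (psh1 k) with hc1
  set c2 := algebraMap ℚ[X] (RatFunc ℚ) (psh2 k) with hc2
  set s1 := algebraMap ℚ[X] (RatFunc ℚ) (1 - X^(2*k+1)) with hs1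
  set s2 := algebraMap ℚ[X] (RatFunc ℚ) (1 + X^(2*k+1)) with hs2'
  field_simp

/-- For odd `n`, the central term
`a_{n,(n-1)/2} = (q;q²)_n q^((n²-4n+3)/4) [n-1 choose (n-1)/2]_{q²} / ((1-qⁿ)(q²;q²)_{n-1})`
satisfies `a_{n,(n-1)/2} ≡ (-1)^((n-1)/2) q^(1-n) [2n choose n]_q / (1+qⁿ) (mod Φ_n(q)²)`. -/
theorem central_term_congruence (n : ℕ) (hn : 0 < n) (ho : Odd n) :
    qCongruent n 2
      (qPoch RatFunc.X (RatFunc.X ^ 2) n * RatFunc.X ^ (((n : ℤ) ^ 2 - 4 * n + 3) / 4) *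
          (qPoch (RatFunc.X ^ 2) (RatFunc.X ^ 2) (n - 1) /
            (qPoch (RatFunc.X ^ 2) (RatFunc.X ^ 2) ((n - 1) / 2) *
              qPoch (RatFunc.X ^ 2) (RatFunc.X ^ 2) (n - 1 - (n - 1) / 2))) /
        ((1 - RatFunc.X ^ n) * qPoch (RatFunc.X ^ 2) (RatFunc.X ^ 2) (n - 1)))
      ((-1) ^ ((n - 1) / 2) * RatFunc.X ^ ((1 : ℤ) - (n : ℤ)) *
        (qPoch RatFunc.X RatFunc.X (2 * n) / (qPoch RatFunc.X RatFunc.X n) ^ 2) /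
        (1 + RatFunc.X ^ n)) := by
  obtain ⟨k, rfl⟩ := ho
  have hkk : k ≤ k*k := by
    cases k with
    | zero => simp
    | succ l => exact Nat.le_mul_of_pos_left _ (Nat.succ_pos l)
  have he2 : (k*k - k) + 2*k = k*(k+1) := by
    cases k with
    | zero => simp
    | succ l =>
        rw [show (l+1)*(l+1) = (l*l+l)+(l+1) by ring, Nat.add_sub_cancel]; ring
  obtain ⟨c, hc⟩ := cyclotomic.dvd_X_pow_sub_one (2*k+1) ℚ
  obtain ⟨M, hM⟩ := hD2 k
  refine ⟨c^2 * (psh2 k * M), X^(2*k) * (po k * pe k) * (pe k)^2, hg₀ k, ?_⟩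
  rw [show 2*k+1-1 = 2*k by omega, show (2*k)/2 = k by omega, show 2*k - k = k by omega]
  rw [show (((2*k+1:ℕ):ℤ)^2 - 4*((2*k+1:ℕ):ℤ) + 3)/4 = ((k*k - k : ℕ) : ℤ) by
    rw [show (((2*k+1:ℕ):ℤ)^2 - 4*((2*k+1:ℕ):ℤ) + 3) = 4 * ((k*k - k : ℕ) : ℤ) by
      rw [Nat.cast_sub hkk]; push_cast; ring]
    exact Int.mul_ediv_cancel_left _ (by norm_num)]
  rw [zpow_natCast]
  rw [show (1:ℤ) - ((2*k+1:ℕ):ℤ) = -((2*k:ℕ):ℤ) by push_cast; ring, zpow_neg, zpow_natCast]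
  rw [qPoch_odd, qPoch_even (2*k), qPoch_even k, qPoch_q (2*(2*k+1)), qPoch_q (2*k+1)]
  rw [hP1 k, hF4k2 k, hF2k1 k]
  rw [sub_mul, hAmul k (k*k-k) he2, hBmul k, ← map_sub]
  refine congrArg _ ?_
  linear_combination (psh2 k) * hM +
    (psh2 k * M * ((X^(2*k+1) - 1) + cyclotomic (2*k+1) ℚ * c)) * hc
end

section
/- Let n be a positive odd integer and d an integer with n > 2|d| - 1. Then sum_{k=0}^{n-1} ((q^(2d+1); q^2)_k / (q; q)_k) q^k ≡ (-1)^((n-1)/2 + d) q^((n^2 - (2d+1)^2)/4) (mod Φ_n(q)). -/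
open Finset Polynomial

noncomputable abbrev XX : RatFunc ℚ := RatFunc.X

/-- (q;q)_k with q = X -/
noncomputable def fq (k : ℕ) : RatFunc ℚ := ∏ i ∈ Finset.range k, (1 - XX ^ (i+1))
/-- ∏_{a ≤ i < b} (1 + X^i) -/
noncomputable def pp (a b : ℕ) : RatFunc ℚ := ∏ i ∈ Finset.Ico a b, (1 + XX ^ i)
/-- Gaussian binomial as ratio -/
noncomputable def qb (m j : ℕ) : RatFunc ℚ := fq m / (fq j * fq (m - j))
/-- (q²;q²)_k with q = X -/
noncomputable def fq2 (k : ℕ) : RatFunc ℚ := ∏ i ∈ Finset.range k, (1 - XX ^ (2*i+2))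

lemma X_pow_ne_one_s17 {j : ℕ} (hj : 1 ≤ j) : (XX : RatFunc ℚ) ^ j ≠ 1 := by
  intro h
  have : (Polynomial.X : Polynomial ℚ) ^ j = 1 := by
    apply RatFunc.algebraMap_injective ℚ
    simpa [map_pow, RatFunc.algebraMap_X] using h
  have h2 := congrArg (fun p => Polynomial.coeff p 0) this
  simp only [Polynomial.coeff_X_pow, Polynomial.coeff_one] at h2
  rw [if_neg (by omega : ¬ (0:ℕ) = j)] at h2
  norm_num at h2

lemma X_pow_ne_neg_one {j : ℕ} (hj : 1 ≤ j) : (XX : RatFunc ℚ) ^ j ≠ -1 := by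
  intro h
  have : (Polynomial.X : Polynomial ℚ) ^ j = -1 := by
    apply RatFunc.algebraMap_injective ℚ
    simpa [map_pow, map_neg, RatFunc.algebraMap_X] using h
  have h2 := congrArg (fun p => Polynomial.coeff p 0) this
  simp only [Polynomial.coeff_X_pow, Polynomial.coeff_neg, Polynomial.coeff_one] at h2
  rw [if_neg (by omega : ¬ (0:ℕ) = j)] at h2
  norm_num at h2

lemma one_sub_ne {j : ℕ} (hj : 1 ≤ j) : (1 : RatFunc ℚ) - XX ^ j ≠ 0 := by
  intro h; exact X_pow_ne_one_s17 hj (sub_eq_zero.mp h).symm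

lemma one_add_ne {j : ℕ} (hj : 1 ≤ j) : (1 : RatFunc ℚ) + XX ^ j ≠ 0 := by
  intro h
  exact X_pow_ne_neg_one hj (eq_neg_of_add_eq_zero_right h)

lemma fq_ne_zero (k : ℕ) : fq k ≠ 0 := by
  unfold fq
  exact Finset.prod_ne_zero_iff.mpr fun i _ => one_sub_ne (by omega)

lemma fq2_ne_zero (k : ℕ) : fq2 k ≠ 0 := by
  unfold fq2
  exact Finset.prod_ne_zero_iff.mpr fun i _ => one_sub_ne (by omega)

lemma pp_ne_zero {a b : ℕ} (ha : 1 ≤ a) : pp a b ≠ 0 := by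
  unfold pp
  exact Finset.prod_ne_zero_iff.mpr fun i hi => one_add_ne (le_trans ha (Finset.mem_Ico.mp hi).1)

lemma qb_ne_zero (m j : ℕ) : qb m j ≠ 0 := by
  unfold qb
  exact div_ne_zero (fq_ne_zero _) (mul_ne_zero (fq_ne_zero _) (fq_ne_zero _))

lemma fq_succ (k : ℕ) : fq (k+1) = fq k * (1 - XX ^ (k+1)) := Finset.prod_range_succ _ _

lemma fq_zero : fq 0 = 1 := rfl

lemma fq2_succ (k : ℕ) : fq2 (k+1) = fq2 k * (1 - XX ^ (2*k+2)) := Finset.prod_range_succ _ _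

lemma pp_empty (a : ℕ) : pp a a = 1 := by simp [pp]

lemma pp_top {a b : ℕ} (h : a ≤ b) : pp a (b+1) = pp a b * (1 + XX ^ b) :=
  Finset.prod_Ico_succ_top h _

lemma pp_bot {a b : ℕ} (h : a < b) : pp a b = (1 + XX ^ a) * pp (a+1) b :=
  Finset.prod_eq_prod_Ico_succ_bot h _

lemma pp_mul {a b c : ℕ} (hab : a ≤ b) (hbc : b ≤ c) : pp a b * pp b c = pp a c :=
  Finset.prod_Ico_consecutive _ hab hbc

lemma fq2_eq (k : ℕ) : fq2 k = fq k * pp 1 (k+1) := by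
  induction k with
  | zero => simp [fq2, fq, pp_empty]
  | succ k ih =>
    rw [fq2_succ, ih, fq_succ, show pp 1 (k+1+1) = pp 1 (k+1) * (1 + XX ^ (k+1)) from pp_top (by omega)]
    ring

lemma qb_zero (m : ℕ) : qb m 0 = 1 := by simp [qb, fq_zero, div_self (fq_ne_zero m)]

lemma qb_self (m : ℕ) : qb m m = 1 := by
  unfold qb
  rw [Nat.sub_self, fq_zero, mul_one, div_self (fq_ne_zero m)]

lemma qb_succ_self (m : ℕ) : qb (m+1) m = (1 - XX ^ (m+1)) / (1 - XX) := by
  unfold qb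
  rw [fq_succ, (by omega : m + 1 - m = 1)]
  rw [show fq 1 = 1 - XX ^ 1 by simp [fq]]
  rw [pow_one]
  have h1 : (1:RatFunc ℚ) - XX ≠ 0 := by simpa using one_sub_ne (le_refl 1)
  have h2 := one_sub_ne (j := m+1) (by omega)
  have h3 := fq_ne_zero m
  field_simp

lemma qb_pascal (j s : ℕ) :
    qb (j+s+2) (j+1) = qb (j+s+1) (j+1) + XX ^ (s+1) * qb (j+s+1) j := by
  unfold qb
  rw [(by omega : j+s+2 - (j+1) = s+1), (by omega : j+s+1 - (j+1) = s),
    (by omega : j+s+1 - j = s+1)]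
  rw [show fq (j+s+2) = fq (j+s+1) * (1 - XX ^ (j+s+2)) from fq_succ _,
    show fq (s+1) = fq s * (1 - XX ^ (s+1)) from fq_succ _,
    show fq (j+1) = fq j * (1 - XX ^ (j+1)) from fq_succ _]
  have h1 := one_sub_ne (j := s+1) (by omega)
  have h2 := one_sub_ne (j := j+1) (by omega)
  have h3 := fq_ne_zero s
  have h4 := fq_ne_zero j
  have h5 := fq_ne_zero (j+s+1)
  field_simp
  ring

lemma qb_ratio (j s : ℕ) :
    (1 - XX ^ (j+1)) * qb (j+s+1) (j+1) = (1 - XX ^ (s+1)) * qb (j+s+1) j := by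
  unfold qb
  rw [(by omega : j+s+1 - (j+1) = s), (by omega : j+s+1 - j = s+1)]
  rw [show fq (s+1) = fq s * (1 - XX ^ (s+1)) from fq_succ _,
    show fq (j+1) = fq j * (1 - XX ^ (j+1)) from fq_succ _]
  have h1 := one_sub_ne (j := s+1) (by omega)
  have h2 := one_sub_ne (j := j+1) (by omega)
  have h3 := fq_ne_zero s
  have h4 := fq_ne_zero j
  have h5 := fq_ne_zero (j+s+1)
  field_simp

/-- term of the key identity -/
noncomputable def dd (M j : ℕ) : RatFunc ℚ := (-1)^j * XX^(j^2) * qb M j * pp (j+1) (M+1)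
/-- telescoping certificate -/
noncomputable def HH (m t : ℕ) : RatFunc ℚ :=
  (-1)^t * (XX^(t^2+2*t+2+m) + XX^(t^2+t+1+m)) * qb m t * pp (t+2) (m+1)



lemma step1 (k : ℕ) : dd (k+2) 0 - dd (k+1) 0 = HH (k+1) 0 := by
  unfold dd HH
  simp only [qb_zero, pow_zero, one_mul, mul_one, zero_add,
    show (0:ℕ)+1 = 1 from rfl, show (0:ℕ)+2 = 2 from rfl,
    show (0:ℕ)^2 = 0 from rfl, show 2*0 = 0 from rfl,
    show k+1+1 = k+2 from rfl, show k+2+1 = k+3 from rfl]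
  rw [show pp 1 (k+3) = pp 1 (k+2) * (1 + XX^(k+2)) from pp_top (by omega),
    show pp 1 (k+2) = (1 + XX^1) * pp 2 (k+2) from pp_bot (by omega)]
  ring

lemma step3 (k : ℕ) :
    dd (k+2) (k+1) - dd (k+1) (k+1) + dd (k+2) (k+2) = - HH (k+1) k := by
  unfold dd HH
  simp only [show k+1+1 = k+2 from rfl, show k+2+1 = k+3 from rfl]
  rw [show qb (k+2) (k+1) = (1 - XX ^ (k+2)) / (1 - XX) by
        have h := qb_succ_self (k+1); rwa [show k+1+1 = k+2 from rfl] at h,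
    show qb (k+1) k = (1 - XX ^ (k+1)) / (1 - XX) from qb_succ_self k,
    qb_self, qb_self]
  rw [show pp (k+2) (k+3) = pp (k+2) (k+2) * (1 + XX^(k+2)) from pp_top (by omega)]
  simp only [show pp (k+2) (k+2) = 1 from pp_empty _, show pp (k+3) (k+3) = 1 from pp_empty _]
  have h1 : (1:RatFunc ℚ) - XX ≠ 0 := by simpa using one_sub_ne (le_refl 1)
  field_simp
  ring

lemma step2 (t s : ℕ) :
    dd (t+s+3) (t+1) - dd (t+s+2) (t+1) = HH (t+s+2) (t+1) - HH (t+s+2) t := by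
  unfold dd HH
  simp only [show t+1+1 = t+2 from rfl, show t+1+2 = t+3 from rfl,
    show t+s+2+1 = t+s+3 from rfl, show t+s+3+1 = t+s+4 from rfl]
  rw [show qb (t+s+3) (t+1) = qb (t+s+2) (t+1) + XX ^ (s+2) * qb (t+s+2) t by
        have h := qb_pascal t (s+1)
        rw [show t+(s+1)+2 = t+s+3 from by omega, show t+(s+1)+1 = t+s+2 from by omega,
          show s+1+1 = s+2 from by omega] at h
        exact h]
  have hr : qb (t+s+2) t = (1 - XX ^ (t+1)) * qb (t+s+2) (t+1) / (1 - XX ^ (s+2)) := by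
    have h := qb_ratio t (s+1)
    rw [show t+(s+1)+1 = t+s+2 from by omega, show s+1+1 = s+2 from by omega] at h
    rw [eq_div_iff (one_sub_ne (by omega))]
    linear_combination -h
  rw [hr]
  rw [show pp (t+2) (t+s+4) = pp (t+2) (t+s+3) * (1 + XX^(t+s+3)) from pp_top (by omega),
    show pp (t+2) (t+s+3) = (1 + XX^(t+2)) * pp (t+3) (t+s+3) from pp_bot (by omega)]
  have h1 := one_sub_ne (j := s+2) (by omega)
  field_simp
  ring

lemma delta_id (m : ℕ) : ∑ j ∈ Finset.range (m+1), dd m j = 1 := by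
  induction m with
  | zero =>
    simp [dd, qb_zero, pp_empty]
  | succ m ih =>
    cases m with
    | zero =>
      rw [show (0:ℕ)+1+1 = 2 from rfl, Finset.sum_range_succ, Finset.sum_range_one]
      unfold dd
      rw [qb_zero, qb_self, show pp (0+1) (1+1) = pp 1 1 * (1 + XX^1) from pp_top (by omega),
        pp_empty, show pp (1+1) (1+1) = 1 from pp_empty _]
      norm_num
    | succ k =>
      have e1 : ∑ j ∈ Finset.range (k+1+1+1), dd (k+1+1) j
          = (∑ j ∈ Finset.range (k+1+1), dd (k+1+1) j) + dd (k+1+1) (k+1+1) :=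
        Finset.sum_range_succ _ _
      have e2 : ∑ j ∈ Finset.range (k+1+1), dd (k+1+1) j
          = (∑ j ∈ Finset.range (k+1+1), dd (k+1) j)
            + ∑ j ∈ Finset.range (k+1+1), (dd (k+1+1) j - dd (k+1) j) := by
        rw [← Finset.sum_add_distrib]; apply Finset.sum_congr rfl; intro j _; ring
      have e3 : ∑ j ∈ Finset.range (k+1+1), (dd (k+1+1) j - dd (k+1) j)
          = (∑ j ∈ Finset.range (k+1), (dd (k+1+1) (j+1) - dd (k+1) (j+1)))
            + (dd (k+1+1) 0 - dd (k+1) 0) := Finset.sum_range_succ' _ _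
      have e4 : ∑ j ∈ Finset.range (k+1), (dd (k+1+1) (j+1) - dd (k+1) (j+1))
          = (∑ j ∈ Finset.range k, (dd (k+1+1) (j+1) - dd (k+1) (j+1)))
            + (dd (k+1+1) (k+1) - dd (k+1) (k+1)) := Finset.sum_range_succ _ _
      have e5 : ∑ j ∈ Finset.range k, (dd (k+1+1) (j+1) - dd (k+1) (j+1))
          = HH (k+1) k - HH (k+1) 0 := by
        rw [← Finset.sum_range_sub (fun j => HH (k+1) j) k]
        apply Finset.sum_congr rfl; intro j hj
        have hj' := Finset.mem_range.mp hj
        have h := step2 j (k-1-j)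
        rw [show j+(k-1-j)+3 = k+1+1 from by omega, show j+(k-1-j)+2 = k+1 from by omega] at h
        exact h
      have h1 := step1 k
      have h3 := step3 k
      rw [show k+2 = k+1+1 from rfl] at h1 h3
      rw [e1, e2, ih, e3, e4, e5]
      linear_combination h1 + h3

lemma neg_one_pow_sub {j m : ℕ} (hj : j ≤ m) :
    (-1 : RatFunc ℚ)^(m-j) = (-1)^m * (-1)^j := by
  have h := pow_add (-1 : RatFunc ℚ) (m-j) j
  rw [Nat.sub_add_cancel hj] at h
  have hsq : ((-1 : RatFunc ℚ)^j) * ((-1)^j) = 1 := by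
    rw [← pow_add, ← two_mul, pow_mul]; norm_num
  calc (-1 : RatFunc ℚ)^(m-j) = (-1)^(m-j) * (((-1:RatFunc ℚ)^j) * ((-1)^j)) := by
        rw [hsq, mul_one]
    _ = (-1)^m * (-1)^j := by rw [← mul_assoc, ← h]

lemma sPoch_vanish (m k : ℕ) (h : m < k) : qPoch (XX ^ (-(2*(m:ℤ)))) (XX^2) k = 0 := by
  unfold qPoch
  apply Finset.prod_eq_zero (Finset.mem_range.mpr h)
  have h1 : XX ^ (-(2*(m:ℤ))) * (XX^2)^m = 1 := by
    rw [← pow_mul, ← zpow_natCast XX (2*m), ← zpow_add₀ RatFunc.X_ne_zero]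
    norm_num
  rw [h1, sub_self]

lemma sPoch_eq (m : ℕ) : ∀ k, k ≤ m →
    qPoch (XX ^ (-(2*(m:ℤ)))) (XX^2) k * fq2 (m-k)
      = (-1)^k * XX ^ (((k:ℕ):ℤ)^2 - ((k:ℕ):ℤ) - 2*(m:ℤ)*((k:ℕ):ℤ)) * fq2 m := by
  intro k
  induction k with
  | zero => intro _; simp [qPoch]
  | succ k ih =>
    intro hk1
    have hk : k ≤ m := by omega
    have hXne : (XX : RatFunc ℚ) ≠ 0 := RatFunc.X_ne_zero
    have hstep : qPoch (XX ^ (-(2*(m:ℤ)))) (XX^2) (k+1)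
        = qPoch (XX ^ (-(2*(m:ℤ)))) (XX^2) k * (1 - XX ^ ((2*(k:ℤ)) - 2*m)) := by
      unfold qPoch
      rw [Finset.prod_range_succ]
      congr 2
      rw [← pow_mul, ← zpow_natCast (XX : RatFunc ℚ) (2*k), ← zpow_add₀ hXne]
      congr 1
      push_cast; ring
    have hflip : (1 : RatFunc ℚ) - XX ^ ((2*(k:ℤ)) - 2*m)
        = (- XX ^ ((2*(k:ℤ)) - 2*m)) * (1 - XX ^ (2*(m-(k+1))+2)) := by
      have hinv : XX ^ ((2*(k:ℤ)) - 2*m) * XX ^ (2*(m-(k+1))+2) = 1 := by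
        rw [← zpow_natCast (XX:RatFunc ℚ) (2*(m-(k+1))+2), ← zpow_add₀ hXne]
        rw [show (2*(k:ℤ) - 2*m) + ((2*(m-(k+1))+2:ℕ):ℤ) = 0 by
          push_cast [Nat.cast_sub (show k+1 ≤ m from hk1)]; ring]
        exact zpow_zero _
      linear_combination -hinv
    have hfq2 : fq2 (m-k) = fq2 (m-(k+1)) * (1 - XX ^ (2*(m-(k+1))+2)) := by
      rw [show m - k = m - (k+1) + 1 from by omega]; exact fq2_succ _
    have hexp : XX ^ ((2*(k:ℤ)) - 2*m) * XX ^ (((k:ℕ):ℤ)^2 - ((k:ℕ):ℤ) - 2*(m:ℤ)*((k:ℕ):ℤ))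
        = XX ^ ((((k+1:ℕ)):ℤ)^2 - (((k+1:ℕ)):ℤ) - 2*(m:ℤ)*(((k+1:ℕ)):ℤ)) := by
      rw [← zpow_add₀ hXne]
      congr 1
      push_cast; ring
    calc qPoch (XX ^ (-(2*(m:ℤ)))) (XX^2) (k+1) * fq2 (m-(k+1))
        = (- XX ^ ((2*(k:ℤ)) - 2*m)) *
            (qPoch (XX ^ (-(2*(m:ℤ)))) (XX^2) k * (fq2 (m-(k+1)) * (1 - XX ^ (2*(m-(k+1))+2)))) := by
          rw [hstep, hflip]; ring
      _ = (- XX ^ ((2*(k:ℤ)) - 2*m)) *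
            (qPoch (XX ^ (-(2*(m:ℤ)))) (XX^2) k * fq2 (m-k)) := by rw [← hfq2]
      _ = (- XX ^ ((2*(k:ℤ)) - 2*m)) *
            ((-1)^k * XX ^ (((k:ℕ):ℤ)^2 - ((k:ℕ):ℤ) - 2*(m:ℤ)*((k:ℕ):ℤ)) * fq2 m) := by
          rw [ih hk]
      _ = (-1)^(k+1) * XX ^ ((((k+1:ℕ)):ℤ)^2 - (((k+1:ℕ)):ℤ) - 2*(m:ℤ)*(((k+1:ℕ)):ℤ)) * fq2 m := by
          rw [← hexp, pow_succ]; ring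

lemma S_id (m : ℕ) :
    ∑ k ∈ Finset.range (m+1), qPoch (XX ^ (-(2*(m:ℤ)))) (XX^2) k / fq k * XX^k
      = (-1)^m * (XX ^ (m^2))⁻¹ := by
  have hXne : (XX : RatFunc ℚ) ≠ 0 := RatFunc.X_ne_zero
  have key : ∀ j ∈ Finset.range (m+1),
      qPoch (XX ^ (-(2*(m:ℤ)))) (XX^2) (m+1-1-j) / fq (m+1-1-j) * XX^(m+1-1-j)
        = ((-1)^m * (XX ^ (m^2))⁻¹) * dd m j := by
    intro j hj'
    have hj : j ≤ m := Nat.lt_succ_iff.mp (Finset.mem_range.mp hj')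
    rw [show m+1-1-j = m-j from by omega]
    have hP := sPoch_eq m (m-j) (by omega)
    rw [show m - (m-j) = j from by omega] at hP
    have hq : qPoch (XX ^ (-(2*(m:ℤ)))) (XX^2) (m-j)
        = (-1)^(m-j) * XX ^ ((((m-j:ℕ)):ℤ)^2 - (((m-j:ℕ)):ℤ) - 2*(m:ℤ)*(((m-j:ℕ)):ℤ)) * fq2 m / fq2 j := by
      rw [eq_div_iff (fq2_ne_zero j)]; exact hP
    rw [hq, neg_one_pow_sub hj]
    unfold dd qb
    rw [fq2_eq m, fq2_eq j,
      show pp 1 (m+1) = pp 1 (j+1) * pp (j+1) (m+1) from (pp_mul (by omega) (by omega)).symm]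
    have hE : XX ^ ((((m-j:ℕ)):ℤ)^2 - (((m-j:ℕ)):ℤ) - 2*(m:ℤ)*(((m-j:ℕ)):ℤ))
        = XX^(j^2) * ((XX^(m^2))⁻¹ * (XX^((m-j:ℕ)))⁻¹) := by
      rw [show (((m-j:ℕ)):ℤ)^2 - (((m-j:ℕ)):ℤ) - 2*(m:ℤ)*(((m-j:ℕ)):ℤ)
          = ((j^2:ℕ):ℤ) - ((m^2:ℕ):ℤ) - ((m-j:ℕ):ℤ) by push_cast [Nat.cast_sub hj]; ring]
      rw [zpow_sub₀ hXne, zpow_sub₀ hXne, zpow_natCast, zpow_natCast, zpow_natCast]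
      field_simp
    rw [hE]
    have h1 := fq_ne_zero j; have h2 := fq_ne_zero (m-j); have h3 := fq_ne_zero m
    have h4 : pp 1 (j+1) ≠ 0 := pp_ne_zero (le_refl 1)
    have h5 : (XX:RatFunc ℚ)^(m^2) ≠ 0 := pow_ne_zero _ hXne
    have h6 : (XX:RatFunc ℚ)^(m-j) ≠ 0 := pow_ne_zero _ hXne
    field_simp
  calc ∑ k ∈ Finset.range (m+1), qPoch (XX ^ (-(2*(m:ℤ)))) (XX^2) k / fq k * XX^k
      = ∑ j ∈ Finset.range (m+1),
          qPoch (XX ^ (-(2*(m:ℤ)))) (XX^2) (m+1-1-j) / fq (m+1-1-j) * XX^(m+1-1-j) :=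
        (Finset.sum_range_reflect (fun k => qPoch (XX ^ (-(2*(m:ℤ)))) (XX^2) k / fq k * XX^k)
          (m+1)).symm
    _ = ∑ j ∈ Finset.range (m+1), ((-1)^m * (XX ^ (m^2))⁻¹) * dd m j :=
        Finset.sum_congr rfl key
    _ = (-1)^m * (XX ^ (m^2))⁻¹ := by rw [← Finset.mul_sum, delta_id, mul_one]

/-- Elements of ℚ(X) with denominator coprime to Φₙ. -/
def Ok (n : ℕ) (x : RatFunc ℚ) : Prop :=
  ∃ f g : Polynomial ℚ, ¬ Polynomial.cyclotomic n ℚ ∣ g ∧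
    x * algebraMap (Polynomial ℚ) (RatFunc ℚ) g = algebraMap (Polynomial ℚ) (RatFunc ℚ) f

noncomputable def zeta (n : ℕ) : ℂ := Complex.exp (2 * Real.pi * Complex.I / n)

lemma zeta_prim {n : ℕ} (hn : 0 < n) : IsPrimitiveRoot (zeta n) n :=
  Complex.isPrimitiveRoot_exp n hn.ne'

lemma cyclo_not_dvd {n : ℕ} (hn : 0 < n) {g : Polynomial ℚ}
    (h : Polynomial.aeval (zeta n) g ≠ 0) : ¬ Polynomial.cyclotomic n ℚ ∣ g := by
  rintro ⟨c, rfl⟩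
  apply h
  rw [map_mul]
  have hz : Polynomial.aeval (zeta n) (Polynomial.cyclotomic n ℚ) = 0 := by
    rw [Polynomial.aeval_def, ← Polynomial.eval_map, Polynomial.map_cyclotomic]
    exact (zeta_prim hn).isRoot_cyclotomic hn
  rw [hz, zero_mul]

lemma not_dvd_X_pow {n : ℕ} (hn : 0 < n) (k : ℕ) :
    ¬ Polynomial.cyclotomic n ℚ ∣ Polynomial.X ^ k := by
  apply cyclo_not_dvd hn
  rw [map_pow, Polynomial.aeval_X]
  exact pow_ne_zero _ ((zeta_prim hn).ne_zero hn.ne')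

lemma not_dvd_one_sub_X_pow {n j : ℕ} (hn : 0 < n) (hj : ¬ n ∣ j) :
    ¬ Polynomial.cyclotomic n ℚ ∣ (1 - Polynomial.X ^ j) := by
  apply cyclo_not_dvd hn
  rw [map_sub, map_one, map_pow, Polynomial.aeval_X, sub_ne_zero]
  intro h
  exact hj (((zeta_prim hn).pow_eq_one_iff_dvd j).mp h.symm)

lemma cyclo_prime {n : ℕ} (hn : 0 < n) : Prime (Polynomial.cyclotomic n ℚ) :=
  (cyclotomic.irreducible_rat hn).prime

lemma ok_algebraMap {n : ℕ} (hn : 0 < n) (f : Polynomial ℚ) :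
    Ok n (algebraMap (Polynomial ℚ) (RatFunc ℚ) f) :=
  ⟨f, 1, fun h => (cyclo_prime hn).not_unit (isUnit_of_dvd_one h), by rw [map_one, mul_one]⟩

lemma ok_one {n : ℕ} (hn : 0 < n) : Ok n 1 := by
  simpa using ok_algebraMap hn 1

lemma ok_zero {n : ℕ} (hn : 0 < n) : Ok n 0 := by
  simpa using ok_algebraMap hn 0

lemma ok_mul {n : ℕ} (hn : 0 < n) {x y : RatFunc ℚ} (hx : Ok n x) (hy : Ok n y) :
    Ok n (x * y) := by
  obtain ⟨f, g, hg, hfg⟩ := hx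
  obtain ⟨f', g', hg', hfg'⟩ := hy
  refine ⟨f * f', g * g', fun h => ?_, ?_⟩
  · rcases (cyclo_prime hn).dvd_mul.mp h with h | h
    exacts [hg h, hg' h]
  · rw [map_mul, map_mul]
    calc x * y * (algebraMap (Polynomial ℚ) (RatFunc ℚ) g * algebraMap (Polynomial ℚ) (RatFunc ℚ) g')
        = (x * algebraMap (Polynomial ℚ) (RatFunc ℚ) g) * (y * algebraMap (Polynomial ℚ) (RatFunc ℚ) g') := by ring
      _ = _ := by rw [hfg, hfg']

lemma ok_add {n : ℕ} (hn : 0 < n) {x y : RatFunc ℚ} (hx : Ok n x) (hy : Ok n y) :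
    Ok n (x + y) := by
  obtain ⟨f, g, hg, hfg⟩ := hx
  obtain ⟨f', g', hg', hfg'⟩ := hy
  refine ⟨f * g' + f' * g, g * g', fun h => ?_, ?_⟩
  · rcases (cyclo_prime hn).dvd_mul.mp h with h | h
    exacts [hg h, hg' h]
  · rw [map_mul, map_add, map_mul, map_mul]
    calc (x + y) * (algebraMap (Polynomial ℚ) (RatFunc ℚ) g * algebraMap (Polynomial ℚ) (RatFunc ℚ) g')
        = (x * algebraMap (Polynomial ℚ) (RatFunc ℚ) g) * algebraMap (Polynomial ℚ) (RatFunc ℚ) g'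
          + (y * algebraMap (Polynomial ℚ) (RatFunc ℚ) g') * algebraMap (Polynomial ℚ) (RatFunc ℚ) g := by
          ring
      _ = _ := by rw [hfg, hfg']; try ring

lemma ok_neg {n : ℕ} {x : RatFunc ℚ} (hx : Ok n x) : Ok n (-x) := by
  obtain ⟨f, g, hg, hfg⟩ := hx
  exact ⟨-f, g, hg, by rw [map_neg, neg_mul, hfg]⟩

lemma ok_sub {n : ℕ} (hn : 0 < n) {x y : RatFunc ℚ} (hx : Ok n x) (hy : Ok n y) :
    Ok n (x - y) := by
  rw [sub_eq_add_neg]; exact ok_add hn hx (ok_neg hy)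

lemma ok_inv_den {n : ℕ} {g : Polynomial ℚ} (hg : ¬ Polynomial.cyclotomic n ℚ ∣ g) :
    Ok n (algebraMap (Polynomial ℚ) (RatFunc ℚ) g)⁻¹ := by
  have hg0 : g ≠ 0 := fun h => hg (h ▸ dvd_zero _)
  refine ⟨1, g, hg, ?_⟩
  rw [map_one, inv_mul_cancel₀ (RatFunc.algebraMap_ne_zero hg0)]

lemma ok_X_pow {n : ℕ} (hn : 0 < n) (k : ℕ) : Ok n ((XX : RatFunc ℚ) ^ k) := by
  have : (XX : RatFunc ℚ) ^ k = algebraMap (Polynomial ℚ) (RatFunc ℚ) (Polynomial.X ^ k) := by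
    rw [map_pow, RatFunc.algebraMap_X]
  rw [this]; exact ok_algebraMap hn _

lemma ok_X_zpow {n : ℕ} (hn : 0 < n) (z : ℤ) : Ok n ((XX : RatFunc ℚ) ^ z) := by
  rcases z with k | k
  · rw [Int.ofNat_eq_coe, zpow_natCast]; exact ok_X_pow hn k
  · rw [zpow_negSucc]
    have : (XX : RatFunc ℚ) ^ (k+1) = algebraMap (Polynomial ℚ) (RatFunc ℚ) (Polynomial.X ^ (k+1)) := by
      rw [map_pow, RatFunc.algebraMap_X]
    rw [this]
    exact ok_inv_den (not_dvd_X_pow hn (k+1))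

lemma ok_sum {n : ℕ} (hn : 0 < n) {s : Finset ℕ} {F : ℕ → RatFunc ℚ}
    (h : ∀ k ∈ s, Ok n (F k)) : Ok n (∑ k ∈ s, F k) := by
  classical
  induction s using Finset.induction_on with
  | empty => simpa using ok_zero hn
  | insert _ _ hx ih =>
    rw [Finset.sum_insert hx]
    exact ok_add hn (h _ (Finset.mem_insert_self _ _))
      (ih fun k hk => h k (Finset.mem_insert_of_mem hk))

/-- congruence mod Φₙ in the localization -/
def Cong (n : ℕ) (A B : RatFunc ℚ) : Prop :=
  ∃ c, Ok n c ∧ A - B = algebraMap (Polynomial ℚ) (RatFunc ℚ) (Polynomial.cyclotomic n ℚ) * c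

lemma cong_refl {n : ℕ} (hn : 0 < n) (A : RatFunc ℚ) : Cong n A A :=
  ⟨0, ok_zero hn, by rw [sub_self, mul_zero]⟩

lemma cong_trans {n : ℕ} (hn : 0 < n) {A B C : RatFunc ℚ}
    (h1 : Cong n A B) (h2 : Cong n B C) : Cong n A C := by
  obtain ⟨c, hc, e⟩ := h1
  obtain ⟨c', hc', e'⟩ := h2
  exact ⟨c + c', ok_add hn hc hc', by rw [mul_add, ← e, ← e']; ring⟩

lemma cong_symm {n : ℕ} {A B : RatFunc ℚ} (h : Cong n A B) : Cong n B A := by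
  obtain ⟨c, hc, e⟩ := h
  exact ⟨-c, ok_neg hc, by rw [mul_neg, ← e]; ring⟩

lemma cong_mul {n : ℕ} (hn : 0 < n) {A B C D : RatFunc ℚ}
    (h1 : Cong n A B) (h2 : Cong n C D) (hA : Ok n A) (hD : Ok n D) :
    Cong n (A * C) (B * D) := by
  obtain ⟨c, hc, e⟩ := h1
  obtain ⟨c', hc', e'⟩ := h2
  refine ⟨A * c' + D * c, ok_add hn (ok_mul hn hA hc') (ok_mul hn hD hc), ?_⟩
  calc A * C - B * D = A * (C - D) + D * (A - B) := by ring
    _ = _ := by rw [e, e']; ring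

lemma cong_sum {n : ℕ} (hn : 0 < n) {s : Finset ℕ} {F G : ℕ → RatFunc ℚ}
    (h : ∀ k ∈ s, Cong n (F k) (G k)) : Cong n (∑ k ∈ s, F k) (∑ k ∈ s, G k) := by
  classical
  induction s using Finset.induction_on with
  | empty => simpa using cong_refl hn 0
  | insert _ _ hx ih =>
    rw [Finset.sum_insert hx, Finset.sum_insert hx]
    obtain ⟨c, hc, e⟩ := h _ (Finset.mem_insert_self _ _)
    obtain ⟨c', hc', e'⟩ := ih fun k hk => h k (Finset.mem_insert_of_mem hk)
    exact ⟨c + c', ok_add hn hc hc', by rw [mul_add, ← e, ← e']; ring⟩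


/-- Wang–Yu: for odd `n > 2|d| - 1`,
`∑_{k=0}^{n-1} (q^(2d+1);q²)_k/(q;q)_k · q^k ≡ (-1)^((n-1)/2 + d) q^((n²-(2d+1)²)/4)
(mod Φ_n(q))`. -/
theorem wang_yu_congruence (n : ℕ) (hn : 0 < n) (ho : Odd n) (d : ℤ)
    (hd : (n : ℤ) > 2 * |d| - 1) :
    qCongruent n 1
      (∑ k ∈ Finset.range n,
        qPoch (RatFunc.X ^ (2 * d + 1)) (RatFunc.X ^ 2) k / qPoch RatFunc.X RatFunc.X k *
          RatFunc.X ^ k)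
      ((-1 : RatFunc ℚ) ^ (((n : ℤ) - 1) / 2 + d) *
        RatFunc.X ^ (((n : ℤ) ^ 2 - (2 * d + 1) ^ 2) / 4)) := by
  obtain ⟨w, hw⟩ := ho
  have hNZ : (n:ℤ) = 2*(w:ℤ)+1 := by rw [hw]; push_cast; ring
  have ha1 := le_abs_self d
  have ha2 := neg_abs_le d
  obtain ⟨m, hm⟩ : ∃ m : ℕ, (m:ℤ) = (w:ℤ) - d :=
    ⟨((w:ℤ) - d).toNat, Int.toNat_of_nonneg (by omega)⟩
  have h2d : 2*d + 1 = (n:ℤ) - 2*(m:ℤ) := by omega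
  have hmn : m + 1 ≤ n := by omega
  have hXne : (XX:RatFunc ℚ) ≠ 0 := RatFunc.X_ne_zero
  obtain ⟨Ψ, hΨ⟩ := cyclotomic.dvd_X_pow_sub_one n ℚ
  have hXn1 : (XX:RatFunc ℚ)^n - 1
      = algebraMap (Polynomial ℚ) (RatFunc ℚ) (cyclotomic n ℚ)
        * algebraMap (Polynomial ℚ) (RatFunc ℚ) Ψ := by
    rw [← map_mul, ← hΨ, map_sub, map_pow, map_one, RatFunc.algebraMap_X]
  -- factor-level congruence
  have hfac : ∀ i : ℕ, Cong n (1 - XX^(2*d+1) * (XX^2)^i)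
      (1 - XX^(-(2*(m:ℤ))) * (XX^2)^i) := by
    intro i
    have hu : XX^(2*d+1) * ((XX:RatFunc ℚ)^2)^i
        = XX^(n:ℕ) * XX^(2*(i:ℤ) - 2*(m:ℤ)) := by
      rw [← pow_mul, ← zpow_natCast XX (2*i), ← zpow_natCast XX n,
        ← zpow_add₀ hXne, ← zpow_add₀ hXne]
      congr 1; push_cast; omega
    have hv : XX^(-(2*(m:ℤ))) * ((XX:RatFunc ℚ)^2)^i = XX^(2*(i:ℤ) - 2*(m:ℤ)) := by
      rw [← pow_mul, ← zpow_natCast XX (2*i), ← zpow_add₀ hXne]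
      congr 1; push_cast; ring
    refine ⟨-(XX^(2*(i:ℤ) - 2*(m:ℤ)) * algebraMap (Polynomial ℚ) (RatFunc ℚ) Ψ),
      ok_neg (ok_mul hn (ok_X_zpow hn _) (ok_algebraMap hn Ψ)), ?_⟩
    rw [hu, hv]
    linear_combination (-(XX^(2*(i:ℤ) - 2*(m:ℤ)))) * hXn1
  have hsq : ∀ i : ℕ, ((XX:RatFunc ℚ)^2)^i = XX^(2*i) := fun i => by rw [← pow_mul]
  have hokfac1 : ∀ i : ℕ, Ok n (1 - XX^(2*d+1) * (XX^2)^i) := fun i =>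
    ok_sub hn (ok_one hn) (ok_mul hn (ok_X_zpow hn _) (by rw [hsq i]; exact ok_X_pow hn _))
  have hokfac2 : ∀ i : ℕ, Ok n (1 - XX^(-(2*(m:ℤ))) * (XX^2)^i) := fun i =>
    ok_sub hn (ok_one hn) (ok_mul hn (ok_X_zpow hn _) (by rw [hsq i]; exact ok_X_pow hn _))
  have hP : ∀ k, Cong n (qPoch (XX^(2*d+1)) (XX^2) k) (qPoch (XX^(-(2*(m:ℤ)))) (XX^2) k)
      ∧ Ok n (qPoch (XX^(2*d+1)) (XX^2) k) := by
    intro k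
    induction k with
    | zero =>
      constructor
      · exact cong_refl hn _
      · show Ok n (qPoch _ _ 0); unfold qPoch; simpa using ok_one hn
    | succ k ih =>
      have e1 : qPoch (XX^(2*d+1)) (XX^2) (k+1)
          = qPoch (XX^(2*d+1)) (XX^2) k * (1 - XX^(2*d+1) * (XX^2)^k)
          := Finset.prod_range_succ _ _
      have e2 : qPoch (XX^(-(2*(m:ℤ)))) (XX^2) (k+1)
          = qPoch (XX^(-(2*(m:ℤ)))) (XX^2) k * (1 - XX^(-(2*(m:ℤ))) * (XX^2)^k)
          := Finset.prod_range_succ _ _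
      rw [e1, e2]
      exact ⟨cong_mul hn ih.1 (hfac k) ih.2 (hokfac2 k), ok_mul hn ih.2 (hokfac1 k)⟩
  -- fq as polynomial image
  have hfqmap : ∀ k, fq k = algebraMap (Polynomial ℚ) (RatFunc ℚ)
      (∏ i ∈ Finset.range k, (1 - Polynomial.X^(i+1))) := by
    intro k
    rw [map_prod]
    unfold fq
    refine Finset.prod_congr rfl fun i _ => ?_
    rw [map_sub, map_one, map_pow, RatFunc.algebraMap_X]
  have hokinvfq : ∀ k, k < n → Ok n (fq k)⁻¹ := by
    intro k hk
    rw [hfqmap k]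
    apply ok_inv_den
    apply cyclo_not_dvd hn
    rw [map_prod]
    apply Finset.prod_ne_zero_iff.mpr
    intro i hi
    rw [map_sub, map_one, map_pow, Polynomial.aeval_X, sub_ne_zero]
    intro h
    have hdvd := ((zeta_prim hn).pow_eq_one_iff_dvd (i+1)).mp h.symm
    have hle := Nat.le_of_dvd (by omega) hdvd
    have hi' := Finset.mem_range.mp hi
    omega
  -- term-level congruence
  have hterm : ∀ k ∈ Finset.range n,
      Cong n (qPoch (XX^(2*d+1)) (XX^2) k / qPoch XX XX k * XX^k)
        (qPoch (XX^(-(2*(m:ℤ)))) (XX^2) k / fq k * XX^k) := by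
    intro k hk
    have hk' := Finset.mem_range.mp hk
    have hq : qPoch XX XX k = fq k := by
      unfold qPoch fq
      refine Finset.prod_congr rfl fun i _ => by rw [pow_succ']
    rw [hq]
    have e1 : qPoch (XX^(2*d+1)) (XX^2) k / fq k * XX^k
        = qPoch (XX^(2*d+1)) (XX^2) k * (XX^k * (fq k)⁻¹) := by
      rw [div_eq_mul_inv]; ring
    have e2 : qPoch (XX^(-(2*(m:ℤ)))) (XX^2) k / fq k * XX^k
        = qPoch (XX^(-(2*(m:ℤ)))) (XX^2) k * (XX^k * (fq k)⁻¹) := by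
      rw [div_eq_mul_inv]; ring
    rw [e1, e2]
    exact cong_mul hn (hP k).1 (cong_refl hn _) (hP k).2
      (ok_mul hn (ok_X_pow hn k) (hokinvfq k hk'))
  have hcong1 := cong_sum hn hterm
  -- evaluate shifted sum
  have hA' : ∑ k ∈ Finset.range n, qPoch (XX^(-(2*(m:ℤ)))) (XX^2) k / fq k * XX^k
      = (-1)^m * (XX^(m^2))⁻¹ := by
    rw [← S_id m]
    refine (Finset.sum_subset (Finset.range_subset_range.mpr hmn) fun k _ hk2 => ?_).symm
    rw [sPoch_vanish m k (by simpa using Finset.mem_range.not.mp hk2), zero_div, zero_mul]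
  rw [hA'] at hcong1
  -- rewrite RHS object B
  have hB : ((-1 : RatFunc ℚ) ^ (((n:ℤ)-1)/2 + d)) * XX ^ (((n:ℤ)^2 - (2*d+1)^2)/4)
      = (-1)^m * (XX^(m*n) * (XX^(m^2))⁻¹) := by
    have hE1 : ((n:ℤ)-1)/2 + d = (m:ℤ) + 2*d := by omega
    have hE2 : ((n:ℤ)^2 - (2*d+1)^2)/4 = ((m*n : ℕ):ℤ) - ((m^2:ℕ):ℤ) := by
      have h4 : (n:ℤ)^2 - (2*d+1)^2 = 4*(((m*n : ℕ):ℤ) - ((m^2:ℕ):ℤ)) := by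
        rw [h2d]; push_cast; ring
      rw [h4, Int.mul_ediv_cancel_left _ (by norm_num)]
    rw [hE1, hE2]
    rw [zpow_add₀ (by norm_num : (-1:RatFunc ℚ) ≠ 0), zpow_natCast]
    rw [show ((-1:RatFunc ℚ))^(2*d) = (((-1:RatFunc ℚ))^(2:ℤ))^d from zpow_mul _ 2 d,
      show ((-1:RatFunc ℚ))^(2:ℤ) = 1 by norm_num, one_zpow, mul_one]
    rw [zpow_sub₀ hXne, zpow_natCast, zpow_natCast, div_eq_mul_inv]
  -- congruence between the two closed forms
  obtain ⟨U, hU⟩ : cyclotomic n ℚ ∣ ((Polynomial.X : Polynomial ℚ)^(m*n) - 1) := by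
    refine dvd_trans (cyclotomic.dvd_X_pow_sub_one n ℚ) ?_
    have h := sub_dvd_pow_sub_pow ((Polynomial.X : Polynomial ℚ)^n) 1 m
    rwa [← pow_mul, one_pow, Nat.mul_comm n m] at h
  have hXmn1 : (XX:RatFunc ℚ)^(m*n) - 1
      = algebraMap (Polynomial ℚ) (RatFunc ℚ) (cyclotomic n ℚ)
        * algebraMap (Polynomial ℚ) (RatFunc ℚ) U := by
    rw [← map_mul, ← hU, map_sub, map_pow, map_one, RatFunc.algebraMap_X]
  have hOkinvXm2 : Ok n ((XX:RatFunc ℚ)^(m^2))⁻¹ := by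
    rw [show (XX:RatFunc ℚ)^(m^2)
        = algebraMap (Polynomial ℚ) (RatFunc ℚ) (Polynomial.X^(m^2)) by
      rw [map_pow, RatFunc.algebraMap_X]]
    exact ok_inv_den (not_dvd_X_pow hn _)
  have hOkneg1 : Ok n ((-1 : RatFunc ℚ)^m) := by
    rw [show ((-1:RatFunc ℚ))^m
        = algebraMap (Polynomial ℚ) (RatFunc ℚ) ((-1 : Polynomial ℚ)^m) by
      rw [map_pow, map_neg, map_one]]
    exact ok_algebraMap hn _
  have hcong2 : Cong n ((-1:RatFunc ℚ)^m * (XX^(m^2))⁻¹)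
      ((-1:RatFunc ℚ)^m * (XX^(m*n) * (XX^(m^2))⁻¹)) := by
    refine ⟨-((-1:RatFunc ℚ)^m * (XX^(m^2))⁻¹ * algebraMap (Polynomial ℚ) (RatFunc ℚ) U),
      ok_neg (ok_mul hn (ok_mul hn hOkneg1 hOkinvXm2) (ok_algebraMap hn U)), ?_⟩
    linear_combination (-((-1:RatFunc ℚ)^m * ((XX:RatFunc ℚ)^(m^2))⁻¹)) * hXmn1
  have hfinal := cong_trans hn hcong1 hcong2
  rw [← hB] at hfinal
  obtain ⟨c, ⟨f, g, hg, hfg⟩, e⟩ := hfinal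
  refine ⟨f, g, hg, ?_⟩
  rw [pow_one, map_mul, e, mul_assoc, hfg]
end
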